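/- arXiv:2011.11463 — 2 statements merged into one kernel-verified Lean document; each statement's English description precedes it below -/
import Mathlib

section
/- Expected total cost of the online scheduling algorithm is bounded by the primal objective of the primal–dual algorithm: when u is drawn uniformly from [0,1), E[J(s, Alg. 2)] ≤ Σ_{t=1}^T (Σ_{k=1}^M C_k x_k(t) + (1/N) Σ_{i=1}^N Σ_{j=1}^t z_{i,j}(t)), where the right side uses the final values computed by Alg. 1. -/
open scoped Classical
open MeasureTheory

noncomputable section

/-- Age of information of user `i` under schedule `d`:
`a_i(0) = 0`, and `a_i(t) = 0` if `1_{i,d(t)}(t) = 1`, `a_i(t) = a_i(t-1) + 1` otherwise. -/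
def age (ind : ℕ → ℕ → ℕ → ℝ) (d : ℕ → ℕ) (i : ℕ) : ℕ → ℕ
  | 0 => 0
  | t + 1 => if ind i (d (t + 1)) (t + 1) = 1 then 0 else age ind d i t + 1

/-- Inner loop of Alg. 1 at a fixed slot: `innerLoop Ck θ ps j` is the value of the current
slot's `x`-variable after processing iterations `1, …, j`, where `ps j` is the (final)
contribution `Σ_{τ=j}^{t-1} x_{k*_τ}(τ)` of the earlier slots.  At iteration `j` the current
value of `Σ_{τ=j}^{t} x_{k*_τ}(τ)` is `ps j + innerLoop Ck θ ps (j-1)`; if it is `< 1`, the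
`x`-variable is increased by `(1/Ck) Σ_{τ=j}^{t} x_{k*_τ}(τ) + 1/(θ·Ck)`. -/
def innerLoop (Ck θ : ℝ) (ps : ℕ → ℝ) : ℕ → ℝ
  | 0 => 0
  | j + 1 =>
      if ps (j + 1) + innerLoop Ck θ ps j < 1 then
        innerLoop Ck θ ps j + (ps (j + 1) + innerLoop Ck θ ps j) / Ck + 1 / (θ * Ck)
      else innerLoop Ck θ ps j

/-- `xvec Ck θ t τ` : the value of `x_{k*_τ}(τ)` after Alg. 1 has processed slots `1, …, t`
(`Ck τ` stands for the cost `C_{k*_τ}` used in slot `τ`). -/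
def xvec (Ck : ℕ → ℝ) (θ : ℝ) : ℕ → ℕ → ℝ
  | 0, _ => 0
  | t + 1, τ =>
      if τ = t + 1 then
        innerLoop (Ck (t + 1)) θ (fun j => ∑ σ ∈ Finset.Ico j (t + 1), xvec Ck θ t σ) (t + 1)
      else xvec Ck θ t τ

/-- Final value of `x_{k*_t}(t)` computed by Alg. 1. -/
def xval (Ck : ℕ → ℝ) (θ : ℝ) (t : ℕ) : ℝ := xvec Ck θ t t

/-- `psFun Ck θ t j = Σ_{σ=j}^{t-1} x_{k*_σ}(σ)` (final values of the slots before `t`). -/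
def psFun (Ck : ℕ → ℝ) (θ : ℝ) (t : ℕ) (j : ℕ) : ℝ :=
  ∑ σ ∈ Finset.Ico j t, xvec Ck θ (t - 1) σ

/-- The update condition of Alg. 1 at iteration `j` of slot `t`: the current value of
`Σ_{τ=j}^{t} x_{k*_τ}(τ)` (earlier slots final, slot `t` after iterations `1,…,j-1`) is `< 1`. -/
def algCond (Ck : ℕ → ℝ) (θ : ℝ) (t j : ℕ) : Prop :=
  psFun Ck θ t j + innerLoop (Ck t) θ (psFun Ck θ t) (j - 1) < 1

/-- Final value of `z_{i,j}(t)` computed by Alg. 1 (it is the same for every user `i`). -/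
def zval (Ck : ℕ → ℝ) (θ : ℝ) (j t : ℕ) : ℝ :=
  if algCond Ck θ t j then
    1 - (psFun Ck θ t j + innerLoop (Ck t) θ (psFun Ck θ t) (j - 1))
  else 0

/-- Final value of `y_{i,j}(t)` computed by Alg. 1 (it is the same for every user `i`). -/
def yval (Ck : ℕ → ℝ) (θ : ℝ) (N : ℕ) (j t : ℕ) : ℝ :=
  if algCond Ck θ t j then 1 / N else 0

/-- `k*_t`: the minimum power level `k ≥ 1` with `1_{i,k}(t) = 1` for every user `i`. -/
def kstar (ind : ℕ → ℕ → ℕ → ℝ) (N : ℕ) (t : ℕ) : ℕ :=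
  sInf {k : ℕ | 1 ≤ k ∧ ∀ i ∈ Finset.Icc 1 N, ind i k t = 1}

/-- `X(t) = Σ_{τ=1}^t min{x_{k*_τ}(τ), 1}`, used by Alg. 2 (so `X(0) = 0`). -/
def bigX (Ck : ℕ → ℝ) (θ : ℝ) (t : ℕ) : ℝ :=
  ∑ τ ∈ Finset.Icc 1 t, min (xval Ck θ τ) 1

/-- Alg. 2 transmits in slot `t` for randomness `u` iff `u + k ∈ [X(t-1), X(t))` for some
integer `k ≥ 0`. -/
def transmits (Ck : ℕ → ℝ) (θ : ℝ) (u : ℝ) (t : ℕ) : Prop :=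
  ∃ k : ℕ, bigX Ck θ (t - 1) ≤ u + k ∧ u + k < bigX Ck θ t

/-- The decision of Alg. 2 in slot `t` for randomness `u`: transmit with power `k*_t`, or idle. -/
def dAlg (ind : ℕ → ℕ → ℕ → ℝ) (N : ℕ) (Ck : ℕ → ℝ) (θ : ℝ) (u : ℝ) (t : ℕ) : ℕ :=
  if transmits Ck θ u t then kstar ind N t else 0

/-- The constant `θ = (1 + 1/C_M)^⌊C_1⌋ − 1` of Alg. 1. -/
def thetaOf (C : ℕ → ℝ) (M : ℕ) : ℝ := (1 + 1 / C M) ^ ⌊C 1⌋ - 1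
section Aux
variable {Ck θ : ℝ} {ps : ℕ → ℝ}

lemma innerLoop_nonneg (hC : 0 < Ck) (hθ : 0 < θ) (hps : ∀ j, 0 ≤ ps j) :
    ∀ j, 0 ≤ innerLoop Ck θ ps j := by
  intro j
  induction j with
  | zero => simp [innerLoop]
  | succ j ih =>
    rw [innerLoop]
    split
    · have h1 : 0 ≤ (ps (j + 1) + innerLoop Ck θ ps j) / Ck :=
        div_nonneg (by linarith [hps (j + 1)]) hC.le
      have h2 : 0 ≤ 1 / (θ * Ck) := by positivity
      linarith
    · exact ih

lemma innerLoop_mono (hC : 0 < Ck) (hθ : 0 < θ) (hps : ∀ j, 0 ≤ ps j) :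
    Monotone (innerLoop Ck θ ps) := by
  apply monotone_nat_of_le_succ
  intro j
  rw [innerLoop]
  split
  · have h1 : 0 ≤ (ps (j + 1) + innerLoop Ck θ ps j) / Ck :=
      div_nonneg (by linarith [hps (j + 1), innerLoop_nonneg hC hθ hps j]) hC.le
    have h2 : 0 ≤ 1 / (θ * Ck) := by positivity
    linarith
  · exact le_rfl

end Aux

lemma xvec_stable (Ck : ℕ → ℝ) (θ : ℝ) :
    ∀ t τ, τ ≤ t → xvec Ck θ t τ = xvec Ck θ τ τ := by
  intro t
  induction t with
  | zero =>
    intro τ hτ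
    have h0 : τ = 0 := Nat.le_zero.mp hτ
    subst h0; rfl
  | succ t ih =>
    intro τ hτ
    rcases Nat.eq_or_lt_of_le hτ with h | h
    · subst h; rfl
    · have hτt : τ ≤ t := Nat.lt_succ_iff.mp h
      rw [xvec, if_neg (by omega)]
      exact ih τ hτt

lemma xvec_nonneg (Ck : ℕ → ℝ) (θ : ℝ) (hC : ∀ t, 0 < Ck t) (hθ : 0 < θ) :
    ∀ t τ, 0 ≤ xvec Ck θ t τ := by
  intro t
  induction t with
  | zero => intro τ; rw [xvec]
  | succ t ih =>
    intro τ
    by_cases h : τ = t + 1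
    · subst h
      rw [xvec, if_pos rfl]
      exact innerLoop_nonneg (hC _) hθ
        (fun j => Finset.sum_nonneg fun σ _ => ih σ) _
    · rw [xvec, if_neg h]; exact ih τ

lemma xval_succ (Ck : ℕ → ℝ) (θ : ℝ) (t : ℕ) :
    xval Ck θ (t + 1) = innerLoop (Ck (t + 1)) θ (psFun Ck θ (t + 1)) (t + 1) := by
  have hps : psFun Ck θ (t + 1) = fun j => ∑ σ ∈ Finset.Ico j (t + 1), xvec Ck θ t σ := by
    funext j; simp [psFun]
  show xvec Ck θ (t + 1) (t + 1) = _
  rw [xvec, if_pos rfl, hps]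
lemma psFun_eq (Ck : ℕ → ℝ) (θ : ℝ) (t j : ℕ) :
    psFun Ck θ t j = ∑ σ ∈ Finset.Ico j t, xval Ck θ σ := by
  unfold psFun xval
  refine Finset.sum_congr rfl fun σ hσ => ?_
  exact xvec_stable Ck θ (t - 1) σ (by have := (Finset.mem_Ico.mp hσ).2; omega)

lemma zval_ge (Ck : ℕ → ℝ) (θ : ℝ) (hC : ∀ s, 0 < Ck s) (hθ : 0 < θ)
    (j t : ℕ) (hj : 1 ≤ j) (hjt : j ≤ t) :
    max 0 (1 - ∑ τ ∈ Finset.Icc j t, min (xval Ck θ τ) 1) ≤ zval Ck θ j t := by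
  have hx : ∀ τ, 0 ≤ xval Ck θ τ := fun τ => xvec_nonneg Ck θ hC hθ τ τ
  have hps : ∀ i, 0 ≤ psFun Ck θ t i := fun i => by
    rw [psFun_eq]; exact Finset.sum_nonneg fun σ _ => hx σ
  have hxt : xval Ck θ t = innerLoop (Ck t) θ (psFun Ck θ t) t := by
    obtain ⟨s, rfl⟩ : ∃ s, t = s + 1 := ⟨t - 1, by omega⟩
    exact xval_succ Ck θ s
  have hmono := innerLoop_mono (hC t) hθ hps
  have hnn := innerLoop_nonneg (hC t) hθ hps
  have hsum : ∑ τ ∈ Finset.Icc j t, min (xval Ck θ τ) 1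
      = (∑ τ ∈ Finset.Ico j t, min (xval Ck θ τ) 1) + min (xval Ck θ t) 1 := by
    rw [← Finset.Ico_add_one_right_eq_Icc, Finset.sum_Ico_succ_top (by omega)]
  have hinnert : innerLoop (Ck t) θ (psFun Ck θ t) (j - 1) ≤ xval Ck θ t := by
    rw [hxt]; exact hmono (by omega)
  unfold zval algCond
  split_ifs with hcond
  · -- condition true
    have hin1 : innerLoop (Ck t) θ (psFun Ck θ t) (j - 1) ≤ 1 := by
      have := hps j; linarith
    have hIco : ∑ τ ∈ Finset.Ico j t, min (xval Ck θ τ) 1 = psFun Ck θ t j := by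
      rw [psFun_eq]
      refine Finset.sum_congr rfl fun σ hσ => ?_
      have hle : xval Ck θ σ ≤ psFun Ck θ t j := by
        rw [psFun_eq]
        exact Finset.single_le_sum (fun τ _ => hx τ) hσ
      have := hnn (j - 1)
      exact min_eq_left (by linarith)
    apply max_le
    · linarith
    · have hmin : innerLoop (Ck t) θ (psFun Ck θ t) (j - 1) ≤ min (xval Ck θ t) 1 :=
        le_min hinnert hin1
      rw [hsum, hIco]; linarith
  · -- condition false
    push_neg at hcond
    apply max_le le_rfl
    rw [hsum]
    by_cases hall : ∀ σ ∈ Finset.Ico j t, xval Ck θ σ ≤ 1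
    · have hIco : ∑ τ ∈ Finset.Ico j t, min (xval Ck θ τ) 1 = psFun Ck θ t j := by
        rw [psFun_eq]
        exact Finset.sum_congr rfl fun σ hσ => min_eq_left (hall σ hσ)
      rw [hIco]
      by_cases h1 : innerLoop (Ck t) θ (psFun Ck θ t) (j - 1) ≤ 1
      · have hmin : innerLoop (Ck t) θ (psFun Ck θ t) (j - 1) ≤ min (xval Ck θ t) 1 :=
          le_min hinnert h1
        linarith
      · have : min (xval Ck θ t) 1 = 1 := min_eq_right (by push_neg at h1; linarith)
        rw [this]
        have := hps j; linarith
    · push_neg at hall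
      obtain ⟨σ, hσ, hσ1⟩ := hall
      have hmem : σ ∈ Finset.Ico j t := hσ
      have h1 : min (xval Ck θ σ) 1 ≤ ∑ τ ∈ Finset.Ico j t, min (xval Ck θ τ) 1 :=
        Finset.single_le_sum (fun τ _ => le_min (hx τ) zero_le_one) hmem
      have h2 : min (xval Ck θ σ) 1 = 1 := min_eq_right hσ1.le
      have h3 : 0 ≤ min (xval Ck θ t) 1 := le_min (hx t) zero_le_one
      linarith

lemma theta_pos (C : ℕ → ℝ) (M : ℕ) (hC1 : 1 ≤ C 1) (hCM : C 1 ≤ C M) :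
    0 < thetaOf C M := by
  unfold thetaOf
  have hCMpos : 0 < C M := by linarith
  have hbase : 1 < 1 + 1 / C M := by
    have : 0 < 1 / C M := by positivity
    linarith
  have hfl : (1 : ℤ) ≤ ⌊C 1⌋ := by
    exact_mod_cast Int.le_floor.mpr (by exact_mod_cast hC1)
  have := one_lt_zpow₀ hbase (by omega : (0:ℤ) < ⌊C 1⌋)
  linarith

lemma kstar_spec (ind : ℕ → ℕ → ℕ → ℝ) (N M t : ℕ) (hM : 1 ≤ M)
    (hcov : ∀ i, ind i M t = 1) :
    1 ≤ kstar ind N t ∧ kstar ind N t ≤ M ∧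
      ∀ i ∈ Finset.Icc 1 N, ind i (kstar ind N t) t = 1 := by
  have hmem : M ∈ {k : ℕ | 1 ≤ k ∧ ∀ i ∈ Finset.Icc 1 N, ind i k t = 1} :=
    ⟨hM, fun i _ => hcov i⟩
  have h1 := Nat.sInf_mem (⟨M, hmem⟩ : Set.Nonempty _)
  exact ⟨h1.1, Nat.sInf_le hmem, h1.2⟩
/-- canonical real indicator of a proposition -/
def indR (P : Prop) : ℝ := if P then 1 else 0

lemma indR_pos {P : Prop} (h : P) : indR P = 1 := if_pos h
lemma indR_neg {P : Prop} (h : ¬ P) : indR P = 0 := if_neg h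
lemma indR_congr {P Q : Prop} (h : P ↔ Q) : indR P = indR Q := by
  by_cases hP : P
  · rw [indR_pos hP, indR_pos (h.mp hP)]
  · rw [indR_neg hP, indR_neg (fun hq => hP (h.mpr hq))]

lemma age_formula (ind : ℕ → ℕ → ℕ → ℝ) (N : ℕ) (Ck : ℕ → ℝ) (θ u : ℝ)
    (hzero : ∀ i t, ind i 0 t = 0)
    (hk : ∀ t i, i ∈ Finset.Icc 1 N → ind i (kstar ind N t) t = 1)
    (i : ℕ) (hi : i ∈ Finset.Icc 1 N) :
    ∀ t, ((age ind (dAlg ind N Ck θ u) i t : ℕ) : ℝ)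
      = ∑ j ∈ Finset.Icc 1 t,
          indR (∀ τ ∈ Finset.Icc j t, ¬ transmits Ck θ u τ) := by
  intro t
  induction t with
  | zero => simp [age]
  | succ t ih =>
    have hd : ind i (dAlg ind N Ck θ u (t + 1)) (t + 1) = 1 ↔ transmits Ck θ u (t + 1) := by
      unfold dAlg
      split_ifs with htr
      · simp [hk _ _ hi, htr]
      · simp [hzero, htr]
    by_cases htr : transmits Ck θ u (t + 1)
    · rw [show age ind (dAlg ind N Ck θ u) i (t + 1) = 0 by
        rw [age, if_pos (hd.mpr htr)]]
      symm
      push_cast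
      apply Finset.sum_eq_zero
      intro j hj
      apply indR_neg
      push_neg
      exact ⟨t + 1, Finset.mem_Icc.mpr ⟨(Finset.mem_Icc.mp hj).2, le_rfl⟩, htr⟩
    · have hage : age ind (dAlg ind N Ck θ u) i (t + 1)
          = age ind (dAlg ind N Ck θ u) i t + 1 := by
        rw [age, if_neg (fun h => htr (hd.mp h))]
      rw [hage, Finset.sum_Icc_succ_top (by omega : 1 ≤ t + 1)]
      push_cast
      rw [ih]
      have hlast : indR (∀ τ ∈ Finset.Icc (t+1) (t+1), ¬ transmits Ck θ u τ) = 1 := by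
        apply indR_pos
        intro τ hτ
        have : τ = t + 1 := by have := Finset.mem_Icc.mp hτ; omega
        subst this; exact htr
      have hcong : ∀ j ∈ Finset.Icc 1 t,
          indR (∀ τ ∈ Finset.Icc j (t+1), ¬ transmits Ck θ u τ)
          = indR (∀ τ ∈ Finset.Icc j t, ¬ transmits Ck θ u τ) := by
        intro j hj
        apply indR_congr
        constructor
        · intro h τ hτ
          have hm := Finset.mem_Icc.mp hτ
          exact h τ (Finset.mem_Icc.mpr ⟨hm.1, by omega⟩)
        · intro h τ hτ
          have hm := Finset.mem_Icc.mp hτ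
          by_cases hτ1 : τ = t + 1
          · subst hτ1; exact htr
          · exact h τ (Finset.mem_Icc.mpr ⟨hm.1, by omega⟩)
      rw [Finset.sum_congr rfl hcong, hlast]
def Sset (A B : ℝ) : Set ℝ := {u | ∃ k : ℕ, A ≤ u + k ∧ u + k < B}

lemma Sset_eq_iUnion (A B : ℝ) : Sset A B = ⋃ k : ℕ, Set.Ico (A - k) (B - k) := by
  ext u
  simp only [Sset, Set.mem_setOf_eq, Set.mem_iUnion, Set.mem_Ico]
  constructor
  · rintro ⟨k, h1, h2⟩; exact ⟨k, by linarith, by linarith⟩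
  · rintro ⟨k, h1, h2⟩; exact ⟨k, by linarith, by linarith⟩

lemma measurableSet_Sset (A B : ℝ) : MeasurableSet (Sset A B) := by
  rw [Sset_eq_iUnion]
  exact MeasurableSet.iUnion fun k => measurableSet_Ico

lemma Ico_subset_Sset {A B : ℝ} (hA : 0 ≤ A) (hB : A + 1 ≤ B) :
    Set.Ico (0:ℝ) 1 ⊆ Sset A B := by
  intro u hu
  obtain ⟨hu0, hu1⟩ := hu
  set m : ℕ := ⌊A⌋.toNat with hm
  have hc : ((m : ℕ) : ℝ) = ((⌊A⌋ : ℤ) : ℝ) := by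
    rw [hm]; exact_mod_cast congrArg (fun z : ℤ => (z : ℝ)) (Int.toNat_of_nonneg (Int.floor_nonneg.mpr hA))
  have hmle : (m : ℝ) ≤ A := by rw [hc]; exact Int.floor_le A
  have hmlt : A < (m : ℝ) + 1 := by rw [hc]; exact Int.lt_floor_add_one A
  by_cases h : A ≤ u + m
  · exact ⟨m, h, by linarith⟩
  · refine ⟨m + 1, ?_, ?_⟩ <;> push_cast <;> [linarith; linarith]

lemma vol_Sset {A B : ℝ} (hA : 0 ≤ A) (hAB : A ≤ B) :
    volume (Set.Ico (0:ℝ) 1 ∩ Sset A B) = ENNReal.ofReal (min (B - A) 1) := by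
  by_cases hB : A + 1 ≤ B
  · have h1 : Set.Ico (0:ℝ) 1 ∩ Sset A B = Set.Ico (0:ℝ) 1 :=
      Set.inter_eq_left.mpr (Ico_subset_Sset hA hB)
    rw [h1, Real.volume_Ico, min_eq_right (by linarith)]
    norm_num
  · push_neg at hB
    set m : ℕ := ⌊A⌋.toNat with hm
    have hc : ((m : ℕ) : ℝ) = ((⌊A⌋ : ℤ) : ℝ) := by
      rw [hm]; exact_mod_cast congrArg (fun z : ℤ => (z : ℝ)) (Int.toNat_of_nonneg (Int.floor_nonneg.mpr hA))
    have hmle : (m : ℝ) ≤ A := by rw [hc]; exact Int.floor_le A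
    have hmlt : A < (m : ℝ) + 1 := by rw [hc]; exact Int.lt_floor_add_one A
    have hset : Set.Ico (0:ℝ) 1 ∩ Sset A B
        = Set.Ico (A - m) (min (B - m) 1) ∪ Set.Ico 0 (B - m - 1) := by
      ext u
      simp only [Set.mem_inter_iff, Set.mem_Ico, Set.mem_union, Sset, Set.mem_setOf_eq]
      constructor
      · rintro ⟨⟨hu0, hu1⟩, k, hk1, hk2⟩
        have hkm : m ≤ k := by
          have : (m : ℝ) < (k : ℝ) + 1 := by linarith
          exact_mod_cast Nat.lt_succ_iff.mp (by exact_mod_cast this)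
        have hkm2 : k ≤ m + 1 := by
          have : (k : ℝ) < (m : ℝ) + 2 := by linarith
          have := (by exact_mod_cast this : k < m + 2)
          omega
        rcases (by omega : k = m ∨ k = m + 1) with rfl | rfl
        · left
          exact ⟨by linarith, lt_min (by linarith) hu1⟩
        · right
          push_cast at hk1 hk2
          exact ⟨hu0, by linarith⟩
      · rintro (⟨h1, h2⟩ | ⟨h1, h2⟩)
        · have h2a := lt_min_iff.mp h2
          exact ⟨⟨by linarith, h2a.2⟩, m, by constructor <;> linarith [h2a.1]⟩
        · refine ⟨⟨h1, by linarith⟩, m + 1, ?_, ?_⟩ <;> push_cast <;> linarith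
    have hdisj : Disjoint (Set.Ico (A - m) (min (B - m) 1)) (Set.Ico (0:ℝ) (B - m - 1)) := by
      apply Set.disjoint_left.mpr
      rintro u ⟨h1, _⟩ ⟨_, h4⟩
      linarith
    rw [hset, measure_union hdisj measurableSet_Ico, Real.volume_Ico, Real.volume_Ico]
    by_cases hB1 : B - m ≤ 1
    · rw [min_eq_left hB1]
      have : ENNReal.ofReal (B - m - 1 - 0) = 0 := by
        rw [ENNReal.ofReal_eq_zero]; linarith
      rw [this, add_zero, min_eq_left (by linarith)]
      congr 1; ring
    · push_neg at hB1
      rw [min_eq_right hB1.le, min_eq_left (by linarith)]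
      rw [← ENNReal.ofReal_add (by linarith) (by linarith)]
      congr 1; ring

lemma vol_Ico_diff_Sset {A B : ℝ} (hA : 0 ≤ A) (hAB : A ≤ B) :
    volume (Set.Ico (0:ℝ) 1 \ Sset A B) = ENNReal.ofReal (1 - min (B - A) 1) := by
  have hsub : Set.Ico (0:ℝ) 1 ∩ Sset A B ⊆ Set.Ico (0:ℝ) 1 := Set.inter_subset_left
  have hms : MeasurableSet (Set.Ico (0:ℝ) 1 ∩ Sset A B) :=
    measurableSet_Ico.inter (measurableSet_Sset A B)
  have hfin : volume (Set.Ico (0:ℝ) 1 ∩ Sset A B) ≠ ⊤ := by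
    rw [vol_Sset hA hAB]; exact ENNReal.ofReal_ne_top
  have h1 : Set.Ico (0:ℝ) 1 \ Sset A B = Set.Ico (0:ℝ) 1 \ (Set.Ico (0:ℝ) 1 ∩ Sset A B) := by
    rw [Set.diff_self_inter]
  rw [h1, measure_diff hsub hms.nullMeasurableSet hfin, vol_Sset hA hAB, Real.volume_Ico]
  rw [← ENNReal.ofReal_sub _ (le_min (by linarith) zero_le_one)]
  norm_num
lemma indR_eq_indicator (P : ℝ → Prop) (c : ℝ) :
    (fun u => c * indR (P u)) = Set.indicator {u | P u} (fun _ => c) := by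
  funext u
  by_cases h : P u
  · rw [Set.indicator_of_mem (show u ∈ {u | P u} from h), indR_pos h, mul_one]
  · rw [Set.indicator_of_notMem (show u ∉ {u | P u} from h), indR_neg h, mul_zero]

lemma integrableOn_indR (P : ℝ → Prop) (hP : MeasurableSet {u | P u}) (c : ℝ) :
    MeasureTheory.IntegrableOn (fun u => c * indR (P u)) (Set.Ico (0:ℝ) 1) := by
  rw [indR_eq_indicator]
  exact ((MeasureTheory.integrableOn_const_iff).mpr
    (Or.inr (by rw [Real.volume_Ico]; exact ENNReal.ofReal_lt_top))).indicator hP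

lemma integral_indR (P : ℝ → Prop) (hP : MeasurableSet {u | P u}) (c : ℝ) :
    ∫ u in Set.Ico (0:ℝ) 1, c * indR (P u)
      = c * (volume (Set.Ico (0:ℝ) 1 ∩ {u | P u})).toReal := by
  rw [indR_eq_indicator, MeasureTheory.setIntegral_indicator hP,
    MeasureTheory.setIntegral_const, smul_eq_mul, mul_comm, measureReal_def]
section BigX
variable (Ck : ℕ → ℝ) (θ : ℝ)

lemma bigX_nonneg (hx : ∀ τ, 0 ≤ xval Ck θ τ) (n : ℕ) : 0 ≤ bigX Ck θ n :=
  Finset.sum_nonneg fun τ _ => le_min (hx τ) zero_le_one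

lemma bigX_mono (hx : ∀ τ, 0 ≤ xval Ck θ τ) {a b : ℕ} (h : a ≤ b) :
    bigX Ck θ a ≤ bigX Ck θ b :=
  Finset.sum_le_sum_of_subset_of_nonneg (Finset.Icc_subset_Icc le_rfl h)
    (fun τ _ _ => le_min (hx τ) zero_le_one)

lemma bigX_diff {j t : ℕ} (hj : 1 ≤ j) (hjt : j ≤ t) :
    bigX Ck θ t - bigX Ck θ (j - 1) = ∑ τ ∈ Finset.Icc j t, min (xval Ck θ τ) 1 := by
  unfold bigX
  have h1 : Finset.Icc 1 t = Finset.Ioc 0 t := Finset.Icc_add_one_left_eq_Ioc 0 t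
  have h2 : Finset.Icc 1 (j - 1) = Finset.Ioc 0 (j - 1) := Finset.Icc_add_one_left_eq_Ioc 0 (j - 1)
  have h3 : Finset.Icc j t = Finset.Ioc (j - 1) t := by
    rw [show j = (j - 1) + 1 by omega]
    exact Finset.Icc_add_one_left_eq_Ioc (j - 1) t
  rw [h1, h2, h3, ← Finset.sum_Ioc_consecutive _ (by omega : 0 ≤ j - 1) (by omega : j - 1 ≤ t)]
  ring

lemma find_slot (hx : ∀ τ, 0 ≤ xval Ck θ τ) :
    ∀ t j, 1 ≤ j → j ≤ t → ∀ v : ℝ, bigX Ck θ (j - 1) ≤ v → v < bigX Ck θ t →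
      ∃ τ, j ≤ τ ∧ τ ≤ t ∧ bigX Ck θ (τ - 1) ≤ v ∧ v < bigX Ck θ τ := by
  intro t
  induction t with
  | zero => intro j h1 h2; omega
  | succ t ih =>
    intro j h1 h2 v hv1 hv2
    by_cases hvt : v < bigX Ck θ t
    · by_cases hjt : j ≤ t
      · obtain ⟨τ, ha, hb, hc, hd⟩ := ih j h1 hjt v hv1 hvt
        exact ⟨τ, ha, by omega, hc, hd⟩
      · have hj1 : j = t + 1 := by omega
        subst hj1
        simp only [Nat.add_sub_cancel] at hv1
        exact absurd hvt (not_lt.mpr hv1)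
    · refine ⟨t + 1, by omega, le_rfl, ?_, hv2⟩
      simp only [Nat.add_sub_cancel]
      exact not_lt.mp hvt

lemma exists_transmit_iff (hx : ∀ τ, 0 ≤ xval Ck θ τ) {j t : ℕ}
    (hj : 1 ≤ j) (hjt : j ≤ t) (u : ℝ) :
    (∃ τ ∈ Finset.Icc j t, transmits Ck θ u τ)
      ↔ u ∈ Sset (bigX Ck θ (j - 1)) (bigX Ck θ t) := by
  constructor
  · rintro ⟨τ, hτ, k, h1, h2⟩
    obtain ⟨hτ1, hτ2⟩ := Finset.mem_Icc.mp hτ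
    exact ⟨k, le_trans (bigX_mono Ck θ hx (by omega)) h1,
      lt_of_lt_of_le h2 (bigX_mono Ck θ hx hτ2)⟩
  · rintro ⟨k, h1, h2⟩
    obtain ⟨τ, ha, hb, hc, hd⟩ := find_slot Ck θ hx t j hj hjt (u + k) h1 h2
    exact ⟨τ, Finset.mem_Icc.mpr ⟨ha, hb⟩, k, hc, hd⟩

lemma noTransmit_set_eq (hx : ∀ τ, 0 ≤ xval Ck θ τ) {j t : ℕ}
    (hj : 1 ≤ j) (hjt : j ≤ t) :
    {u : ℝ | ∀ τ ∈ Finset.Icc j t, ¬ transmits Ck θ u τ}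
      = (Sset (bigX Ck θ (j - 1)) (bigX Ck θ t))ᶜ := by
  ext u
  simp only [Set.mem_setOf_eq, Set.mem_compl_iff]
  rw [← exists_transmit_iff Ck θ hx hj hjt u]
  push_neg
  rfl

end BigX

/-- the expected total cost of Alg. 2 (with `u` uniform on `[0,1)`) is at most
the primal objective value computed by Alg. 1. -/
theorem stmt13 (N M T : ℕ) (hN : 1 ≤ N) (hM : 1 ≤ M) (hT : 1 ≤ T)
    (ind : ℕ → ℕ → ℕ → ℝ)
    (hind01 : ∀ i k t, ind i k t = 0 ∨ ind i k t = 1)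
    (hmono : ∀ i k k' t, k ≤ k' → ind i k t = 1 → ind i k' t = 1)
    (hcov : ∀ i t, ind i M t = 1)
    (hzero : ∀ i t, ind i 0 t = 0)
    (C : ℕ → ℝ) (hC0 : C 0 = 0) (hC1 : 1 ≤ C 1)
    (hCmono : ∀ k k', 1 ≤ k → k ≤ k' → k' ≤ M → C k ≤ C k') :
    (∫ u in Set.Ico (0 : ℝ) 1,
        ∑ t ∈ Finset.Icc 1 T,
          (C (dAlg ind N (fun τ => C (kstar ind N τ)) (thetaOf C M) u t)
            + (1 / N) * ∑ i ∈ Finset.Icc 1 N,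
                (age ind (dAlg ind N (fun τ => C (kstar ind N τ)) (thetaOf C M) u) i t : ℝ)))
      ≤ ∑ t ∈ Finset.Icc 1 T,
          (∑ k ∈ Finset.Icc 1 M,
              C k * (if k = kstar ind N t then
                  xval (fun τ => C (kstar ind N τ)) (thetaOf C M) t else 0)
            + (1 / N) * ∑ i ∈ Finset.Icc 1 N, ∑ j ∈ Finset.Icc 1 t,
                zval (fun τ => C (kstar ind N τ)) (thetaOf C M) j t) := by
  set K : ℕ → ℝ := fun τ => C (kstar ind N τ) with hK
  set θ₀ : ℝ := thetaOf C M with hθdef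
  have hks : ∀ t, 1 ≤ kstar ind N t ∧ kstar ind N t ≤ M ∧
      ∀ i ∈ Finset.Icc 1 N, ind i (kstar ind N t) t = 1 :=
    fun t => kstar_spec ind N M t hM (fun i => hcov i t)
  have hKval : ∀ t, K t = C (kstar ind N t) := fun t => rfl
  have hK1 : ∀ t, 1 ≤ K t := fun t => by
    rw [hKval]
    exact le_trans hC1 (hCmono 1 (kstar ind N t) le_rfl (hks t).1 (hks t).2.1)
  have hKpos : ∀ t, 0 < K t := fun t => lt_of_lt_of_le one_pos (hK1 t)
  have hθ : 0 < θ₀ := theta_pos C M hC1 (hCmono 1 M le_rfl hM le_rfl)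
  have hx : ∀ τ, 0 ≤ xval K θ₀ τ := fun τ => xvec_nonneg K θ₀ hKpos hθ τ τ
  have hXd : ∀ {j t : ℕ}, 1 ≤ j → j ≤ t →
      bigX K θ₀ t - bigX K θ₀ (j - 1) = ∑ τ ∈ Finset.Icc j t, min (xval K θ₀ τ) 1 :=
    fun {j t} hj hjt => bigX_diff K θ₀ hj hjt
  -- transmit set
  have hTset : ∀ t : ℕ, {u : ℝ | transmits K θ₀ u t}
      = Sset (bigX K θ₀ (t - 1)) (bigX K θ₀ t) := fun t => rfl
  have hTm : ∀ t : ℕ, MeasurableSet {u : ℝ | transmits K θ₀ u t} := fun t => by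
    rw [hTset]; exact measurableSet_Sset _ _
  have hQm : ∀ j t : ℕ, 1 ≤ j → j ≤ t →
      MeasurableSet {u : ℝ | ∀ τ ∈ Finset.Icc j t, ¬ transmits K θ₀ u τ} := by
    intro j t hj hjt
    rw [noTransmit_set_eq K θ₀ hx hj hjt]
    exact (measurableSet_Sset _ _).compl
  -- pointwise rewrite
  have hpt : ∀ u : ℝ,
      (∑ t ∈ Finset.Icc 1 T,
        (C (dAlg ind N K θ₀ u t)
          + (1 / N) * ∑ i ∈ Finset.Icc 1 N, (age ind (dAlg ind N K θ₀ u) i t : ℝ)))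
      = ∑ t ∈ Finset.Icc 1 T,
        (K t * indR (transmits K θ₀ u t)
          + (1 / N) * ∑ i ∈ Finset.Icc 1 N, ∑ j ∈ Finset.Icc 1 t,
              indR (∀ τ ∈ Finset.Icc j t, ¬ transmits K θ₀ u τ)) := by
    intro u
    refine Finset.sum_congr rfl fun t ht => ?_
    congr 1
    · unfold dAlg
      by_cases htr : transmits K θ₀ u t
      · rw [if_pos htr, indR_pos htr, mul_one, hKval]
      · rw [if_neg htr, indR_neg htr, mul_zero, hC0]
    · congr 1
      refine Finset.sum_congr rfl fun i hi => ?_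
      exact age_formula ind N K θ₀ u hzero (fun t' i' hi' => (hks t').2.2 i' hi') i hi t
  have h0 : (∫ u in Set.Ico (0 : ℝ) 1,
      ∑ t ∈ Finset.Icc 1 T,
        (C (dAlg ind N K θ₀ u t)
          + (1 / N) * ∑ i ∈ Finset.Icc 1 N, (age ind (dAlg ind N K θ₀ u) i t : ℝ)))
      = ∫ u in Set.Ico (0 : ℝ) 1,
        ∑ t ∈ Finset.Icc 1 T,
          (K t * indR (transmits K θ₀ u t)
            + (1 / N) * ∑ i ∈ Finset.Icc 1 N, ∑ j ∈ Finset.Icc 1 t,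
                indR (∀ τ ∈ Finset.Icc j t, ¬ transmits K θ₀ u τ)) :=
    MeasureTheory.integral_congr_ae (Filter.Eventually.of_forall hpt)
  rw [h0]
  -- integrability
  have hIf1 : ∀ t : ℕ, MeasureTheory.IntegrableOn
      (fun u => K t * indR (transmits K θ₀ u t)) (Set.Ico (0:ℝ) 1) :=
    fun t => integrableOn_indR _ (hTm t) (K t)
  have hIf2 : ∀ j t : ℕ, 1 ≤ j → j ≤ t → MeasureTheory.IntegrableOn
      (fun u => indR (∀ τ ∈ Finset.Icc j t, ¬ transmits K θ₀ u τ)) (Set.Ico (0:ℝ) 1) := by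
    intro j t hj hjt
    have := integrableOn_indR _ (hQm j t hj hjt) 1
    simpa using this
  have hIf2' : ∀ t : ℕ, MeasureTheory.IntegrableOn
      (fun u => (1 / N : ℝ) * ∑ i ∈ Finset.Icc 1 N, ∑ j ∈ Finset.Icc 1 t,
        indR (∀ τ ∈ Finset.Icc j t, ¬ transmits K θ₀ u τ)) (Set.Ico (0:ℝ) 1) := by
    intro t
    apply MeasureTheory.Integrable.const_mul
    apply MeasureTheory.integrable_finset_sum
    intro i hi
    apply MeasureTheory.integrable_finset_sum
    intro j hj
    exact hIf2 j t (Finset.mem_Icc.mp hj).1 (Finset.mem_Icc.mp hj).2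
  have hsplit : (∫ u in Set.Ico (0:ℝ) 1, ∑ t ∈ Finset.Icc 1 T,
        (K t * indR (transmits K θ₀ u t)
          + (1 / N) * ∑ i ∈ Finset.Icc 1 N, ∑ j ∈ Finset.Icc 1 t,
              indR (∀ τ ∈ Finset.Icc j t, ¬ transmits K θ₀ u τ)))
      = ∑ t ∈ Finset.Icc 1 T, ∫ u in Set.Ico (0:ℝ) 1,
        (K t * indR (transmits K θ₀ u t)
          + (1 / N) * ∑ i ∈ Finset.Icc 1 N, ∑ j ∈ Finset.Icc 1 t,
              indR (∀ τ ∈ Finset.Icc j t, ¬ transmits K θ₀ u τ)) := by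
    apply MeasureTheory.integral_finset_sum
    intro t ht
    exact (hIf1 t).add (hIf2' t)
  rw [hsplit]
  apply Finset.sum_le_sum
  intro t ht
  have ht1 : 1 ≤ t := (Finset.mem_Icc.mp ht).1
  have haddsplit : (∫ u in Set.Ico (0:ℝ) 1,
        (K t * indR (transmits K θ₀ u t)
          + (1 / N) * ∑ i ∈ Finset.Icc 1 N, ∑ j ∈ Finset.Icc 1 t,
              indR (∀ τ ∈ Finset.Icc j t, ¬ transmits K θ₀ u τ)))
      = (∫ u in Set.Ico (0:ℝ) 1, K t * indR (transmits K θ₀ u t))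
        + ∫ u in Set.Ico (0:ℝ) 1, (1 / N : ℝ) * ∑ i ∈ Finset.Icc 1 N, ∑ j ∈ Finset.Icc 1 t,
              indR (∀ τ ∈ Finset.Icc j t, ¬ transmits K θ₀ u τ) :=
    MeasureTheory.integral_add (hIf1 t) (hIf2' t)
  rw [haddsplit]
  apply add_le_add
  · -- transmission cost term
    rw [integral_indR _ (hTm t) (K t), hTset t]
    have hA0 : 0 ≤ bigX K θ₀ (t - 1) := bigX_nonneg K θ₀ hx _
    have hABle : bigX K θ₀ (t - 1) ≤ bigX K θ₀ t := bigX_mono K θ₀ hx (by omega)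
    rw [vol_Sset hA0 hABle, ENNReal.toReal_ofReal (le_min (by linarith) zero_le_one)]
    have hdiff : bigX K θ₀ t - bigX K θ₀ (t - 1) = min (xval K θ₀ t) 1 := by
      rw [hXd ht1 le_rfl, Finset.Icc_self, Finset.sum_singleton]
    have hb1 : min (bigX K θ₀ t - bigX K θ₀ (t - 1)) 1 ≤ xval K θ₀ t := by
      rw [hdiff]
      exact le_trans (min_le_left _ _) (min_le_left _ _)
    have hsum : ∑ k ∈ Finset.Icc 1 M, C k * (if k = kstar ind N t then xval K θ₀ t else 0)
        = K t * xval K θ₀ t := by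
      have : ∀ k ∈ Finset.Icc 1 M,
          C k * (if k = kstar ind N t then xval K θ₀ t else 0)
          = if k = kstar ind N t then C k * xval K θ₀ t else 0 := by
        intro k _; rw [mul_ite, mul_zero]
      rw [Finset.sum_congr rfl this, Finset.sum_ite_eq' (Finset.Icc 1 M) (kstar ind N t)
        (fun k => C k * xval K θ₀ t),
        if_pos (Finset.mem_Icc.mpr ⟨(hks t).1, (hks t).2.1⟩), hKval]
    rw [hsum]
    exact mul_le_mul_of_nonneg_left hb1 (le_of_lt (hKpos t))
  · -- age term
    rw [MeasureTheory.integral_const_mul]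
    apply mul_le_mul_of_nonneg_left _ (by positivity : (0:ℝ) ≤ 1 / N)
    rw [MeasureTheory.integral_finset_sum _ (fun i hi =>
      MeasureTheory.integrable_finset_sum _ (fun j hj =>
        hIf2 j t (Finset.mem_Icc.mp hj).1 (Finset.mem_Icc.mp hj).2))]
    apply Finset.sum_le_sum
    intro i hi
    rw [MeasureTheory.integral_finset_sum _ (fun j hj =>
      hIf2 j t (Finset.mem_Icc.mp hj).1 (Finset.mem_Icc.mp hj).2)]
    apply Finset.sum_le_sum
    intro j hj
    have hj1 : 1 ≤ j := (Finset.mem_Icc.mp hj).1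
    have hjt : j ≤ t := (Finset.mem_Icc.mp hj).2
    have hint := integral_indR _ (hQm j t hj1 hjt) 1
    simp only [one_mul] at hint
    rw [hint, noTransmit_set_eq K θ₀ hx hj1 hjt, ← Set.diff_eq]
    have hA0 : 0 ≤ bigX K θ₀ (j - 1) := bigX_nonneg K θ₀ hx _
    have hABle : bigX K θ₀ (j - 1) ≤ bigX K θ₀ t := bigX_mono K θ₀ hx (by omega)
    rw [vol_Ico_diff_Sset hA0 hABle,
      ENNReal.toReal_ofReal (by
        have := min_le_right (bigX K θ₀ t - bigX K θ₀ (j - 1)) 1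
        linarith)]
    have hS : bigX K θ₀ t - bigX K θ₀ (j - 1)
        = ∑ τ ∈ Finset.Icc j t, min (xval K θ₀ τ) 1 := hXd hj1 hjt
    have hzv := zval_ge K θ₀ hKpos hθ j t hj1 hjt
    refine le_trans ?_ hzv
    rw [← hS]
    rcases le_total (bigX K θ₀ t - bigX K θ₀ (j - 1)) 1 with h | h
    · rw [min_eq_left h]
      exact le_max_right _ _
    · rw [min_eq_right h]
      simp

end
end

section
/- Channel-agnostic competitive ratio: modify the algorithm by fixing k*_t = M for every slot t (in both the x-update recursion and the transmission decision, so that every transmission uses power level M and cost C_M). Then for every channel state pattern satisfying the assumptions, when u is drawn uniformly from [0,1), the expected total cost of the channel-agnostic algorithm satisfies E[J(s, channel-agnostic)] ≤ (1 + 1/((1 + 1/C_M)^⌊C_1⌋ − 1)) · OPT(s). -/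
open scoped Classical
open MeasureTheory

noncomputable section

/-- The decision of the channel-agnostic algorithm in slot `t` for randomness `u`:
transmit with the maximum power level `M`, or idle. -/
def dCA (M : ℕ) (Ck : ℕ → ℝ) (θ : ℝ) (u : ℝ) (t : ℕ) : ℕ :=
  if transmits Ck θ u t then M else 0

namespace Stmt15

variable {c θ : ℝ}

lemma innerLoop_succ (c θ : ℝ) (ps : ℕ → ℝ) (j : ℕ) :
    innerLoop c θ ps (j+1) = if ps (j+1) + innerLoop c θ ps j < 1 then
      innerLoop c θ ps j + (ps (j+1) + innerLoop c θ ps j) / c + 1 / (θ * c)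
    else innerLoop c θ ps j := rfl

lemma innerLoop_nonneg (hc : 0 < c) (hθ : 0 < θ) (ps : ℕ → ℝ) (hps : ∀ j, 0 ≤ ps j) :
    ∀ n, 0 ≤ innerLoop c θ ps n := by
  intro n
  induction n with
  | zero => simp [innerLoop]
  | succ n ih =>
    rw [innerLoop_succ]
    split
    · have h1 : 0 ≤ (ps (n+1) + innerLoop c θ ps n) / c :=
        div_nonneg (by linarith [hps (n+1)]) hc.le
      have h2 : 0 ≤ 1 / (θ * c) := by positivity
      linarith
    · exact ih

lemma innerLoop_mono (hc : 0 < c) (hθ : 0 < θ) (ps : ℕ → ℝ) (hps : ∀ j, 0 ≤ ps j) :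
    Monotone (innerLoop c θ ps) := by
  apply monotone_nat_of_le_succ
  intro n
  rw [innerLoop_succ]
  split
  · have h0 := innerLoop_nonneg hc hθ ps hps n
    have h1 : 0 ≤ (ps (n+1) + innerLoop c θ ps n) / c :=
      div_nonneg (by linarith [hps n.succ]) hc.le
    have h2 : 0 ≤ 1 / (θ * c) := by positivity
    linarith
  · exact le_rfl

lemma xvec_succ (Ck : ℕ → ℝ) (θ : ℝ) (t τ : ℕ) :
    xvec Ck θ (t+1) τ = if τ = t + 1 then
        innerLoop (Ck (t + 1)) θ (fun j => ∑ σ ∈ Finset.Ico j (t + 1), xvec Ck θ t σ) (t + 1)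
      else xvec Ck θ t τ := rfl

lemma xvec_nonneg (Ck : ℕ → ℝ) (hc : ∀ t, 0 < Ck t) (hθ : 0 < θ) :
    ∀ t τ, 0 ≤ xvec Ck θ t τ := by
  intro t
  induction t with
  | zero => intro τ; simp [xvec]
  | succ t ih =>
    intro τ
    rw [xvec_succ]
    split
    · exact innerLoop_nonneg (hc (t+1)) hθ _
        (fun j => Finset.sum_nonneg fun σ _ => ih σ) (t+1)
    · exact ih τ

lemma xvec_stable (Ck : ℕ → ℝ) (θ : ℝ) :
    ∀ t τ, τ ≤ t → xvec Ck θ t τ = xval Ck θ τ := by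
  intro t
  induction t with
  | zero => intro τ hτ; interval_cases τ; rfl
  | succ t ih =>
    intro τ hτ
    rw [xvec_succ]
    split
    · subst ‹τ = t + 1›
      show _ = xvec Ck θ (t+1) (t+1)
      rw [xvec_succ, if_pos rfl]
    · exact ih τ (by omega)

lemma psFun_eq (Ck : ℕ → ℝ) (θ : ℝ) (t j : ℕ) :
    psFun Ck θ t j = ∑ σ ∈ Finset.Ico j t, xval Ck θ σ := by
  unfold psFun
  exact Finset.sum_congr rfl fun σ hσ => by
    have := Finset.mem_Ico.1 hσ
    exact xvec_stable Ck θ (t-1) σ (by omega)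

lemma xval_nonneg (Ck : ℕ → ℝ) (hc : ∀ t, 0 < Ck t) (hθ : 0 < θ) (t : ℕ) :
    0 ≤ xval Ck θ t := xvec_nonneg Ck hc hθ t t

lemma psFun_nonneg (Ck : ℕ → ℝ) (hc : ∀ t, 0 < Ck t) (hθ : 0 < θ) (t j : ℕ) :
    0 ≤ psFun Ck θ t j :=
  Finset.sum_nonneg fun σ _ => xvec_nonneg Ck hc hθ _ σ

lemma xval_eq_innerLoop (Ck : ℕ → ℝ) (θ : ℝ) (t : ℕ) (ht : 1 ≤ t) :
    xval Ck θ t = innerLoop (Ck t) θ (psFun Ck θ t) t := by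
  obtain ⟨s, rfl⟩ := Nat.exists_eq_add_of_le ht
  show xvec Ck θ (1+s) (1+s) = _
  rw [show 1 + s = s + 1 by omega]
  rw [xvec_succ, if_pos rfl]
  rfl

end Stmt15
namespace Stmt15

lemma c_mul_innerLoop (c θ : ℝ) (hc : 0 < c) (hθ : 0 < θ) (ps : ℕ → ℝ) :
    ∀ n, c * innerLoop c θ ps n =
      ∑ j ∈ Finset.Icc 1 n,
        (if ps j + innerLoop c θ ps (j-1) < 1
          then (ps j + innerLoop c θ ps (j-1)) + 1/θ else 0) := by
  intro n
  induction n with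
  | zero => simp [innerLoop]
  | succ n ih =>
    rw [show Finset.Icc 1 (n+1) = Finset.Ico 1 (n+2) by rfl,
      Finset.sum_Ico_succ_top (by omega : 1 ≤ n+1),
      show Finset.Ico 1 (n+1) = Finset.Icc 1 n by rfl, ← ih, innerLoop_succ]
    have hc' : c ≠ 0 := ne_of_gt hc
    have hθ' : θ ≠ 0 := ne_of_gt hθ
    simp only [show n + 1 - 1 = n by omega]
    split
    · field_simp; ring
    · ring

lemma slot_identity (c θ : ℝ) (hc : 0 < c) (hθ : 0 < θ) (t : ℕ) (ht : 1 ≤ t) :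
    c * xval (fun _ => c) θ t + ∑ j ∈ Finset.Icc 1 t, zval (fun _ => c) θ j t
      = (1 + 1/θ) * ((Finset.Icc 1 t).filter (fun j => algCond (fun _ => c) θ t j)).card := by
  rw [xval_eq_innerLoop _ _ t ht]
  rw [show innerLoop ((fun _ : ℕ => c) t) θ (psFun (fun _ => c) θ t) t
      = innerLoop c θ (psFun (fun _ => c) θ t) t from rfl,
    c_mul_innerLoop c θ hc hθ _ t, ← Finset.sum_add_distrib]
  have : ∀ j ∈ Finset.Icc 1 t,
      ((if psFun (fun _ => c) θ t j + innerLoop c θ (psFun (fun _ => c) θ t) (j-1) < 1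
          then (psFun (fun _ => c) θ t j + innerLoop c θ (psFun (fun _ => c) θ t) (j-1)) + 1/θ
          else 0) + zval (fun _ => c) θ j t)
        = if algCond (fun _ => c) θ t j then (1 + 1/θ) else 0 := by
    intro j _
    rw [zval, algCond]
    split
    · ring
    · ring
  rw [Finset.sum_congr rfl this, Finset.sum_ite, Finset.sum_const, Finset.sum_const]
  simp [mul_comm]
  ring

lemma zval_nonneg (c θ : ℝ) (t j : ℕ) : 0 ≤ zval (fun _ => c) θ j t := by
  unfold zval
  split
  · have h : algCond (fun _ => c) θ t j := ‹_›
    unfold algCond at h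
    linarith
  · exact le_refl 0

lemma zbound (c θ : ℝ) (hc : 0 < c) (hθ : 0 < θ) (t j : ℕ) (hj : 1 ≤ j) (hjt : j ≤ t) :
    1 - ∑ τ ∈ Finset.Icc j t, min (xval (fun _ => c) θ τ) 1 ≤ zval (fun _ => c) θ j t := by
  set Ck : ℕ → ℝ := fun _ => c with hCk
  have hct : ∀ s, 0 < Ck s := fun _ => hc
  have hxnn : ∀ τ, 0 ≤ xval Ck θ τ := xval_nonneg Ck hct hθ
  have hpsnn : ∀ i, 0 ≤ psFun Ck θ t i := psFun_nonneg Ck hct hθ t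
  have hLmono := innerLoop_mono (c := c) hc hθ (psFun Ck θ t) hpsnn
  have hLnn := innerLoop_nonneg (c := c) hc hθ (psFun Ck θ t) hpsnn
  have hxt : xval Ck θ t = innerLoop c θ (psFun Ck θ t) t := xval_eq_innerLoop Ck θ t (le_trans hj hjt)
  have hLle : innerLoop c θ (psFun Ck θ t) (j-1) ≤ xval Ck θ t := by
    rw [hxt]; exact hLmono (by omega)
  have hsplit : ∑ τ ∈ Finset.Icc j t, min (xval Ck θ τ) 1
      = (∑ τ ∈ Finset.Ico j t, min (xval Ck θ τ) 1) + min (xval Ck θ t) 1 := by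
    rw [show Finset.Icc j t = Finset.Ico j (t+1) by rfl, Finset.sum_Ico_succ_top hjt]
  unfold zval
  split
  · -- algCond holds
    have hS : psFun Ck θ t j + innerLoop c θ (psFun Ck θ t) (j-1) < 1 := by
      have h : algCond Ck θ t j := ‹_›
      unfold algCond at h; exact h
    have hps : psFun Ck θ t j = ∑ τ ∈ Finset.Ico j t, xval Ck θ τ := psFun_eq Ck θ t j
    have hmin : ∀ τ ∈ Finset.Ico j t, min (xval Ck θ τ) 1 = xval Ck θ τ := by
      intro τ hτ
      have h1 : xval Ck θ τ ≤ psFun Ck θ t j := by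
        rw [hps]
        exact Finset.single_le_sum (fun σ _ => hxnn σ) hτ
      have : xval Ck θ τ ≤ 1 := by
        have := hLnn (j-1); linarith
      exact min_eq_left this
    have hL1 : innerLoop c θ (psFun Ck θ t) (j-1) ≤ 1 := by
      have := hpsnn j; linarith
    have hLlemin : innerLoop c θ (psFun Ck θ t) (j-1) ≤ min (xval Ck θ t) 1 :=
      le_min hLle hL1
    rw [hsplit, Finset.sum_congr rfl hmin, ← hps]
    linarith
  · -- algCond fails
    have hS : ¬ (psFun Ck θ t j + innerLoop c θ (psFun Ck θ t) (j-1) < 1) := by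
      have h : ¬ algCond Ck θ t j := ‹_›
      unfold algCond at h; exact h
    push_neg at hS
    have hgoal : 1 ≤ ∑ τ ∈ Finset.Icc j t, min (xval Ck θ τ) 1 := by
      by_cases hbig : ∃ τ ∈ Finset.Icc j t, 1 ≤ xval Ck θ τ
      · obtain ⟨τ, hτ, h1⟩ := hbig
        calc (1:ℝ) = min (xval Ck θ τ) 1 := (min_eq_right h1).symm
          _ ≤ _ := Finset.single_le_sum
              (fun σ _ => le_min (hxnn σ) zero_le_one |>.trans' (by positivity)) hτ
      · push_neg at hbig
        have hmin : ∀ τ ∈ Finset.Icc j t, min (xval Ck θ τ) 1 = xval Ck θ τ :=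
          fun τ hτ => min_eq_left (hbig τ hτ).le
        rw [hsplit] at *
        rw [Finset.sum_congr rfl (fun τ hτ => hmin τ (by
          simp only [Finset.mem_Ico, Finset.mem_Icc] at *; omega))]
        have hmt : min (xval Ck θ t) 1 = xval Ck θ t := hmin t (by simp [Finset.mem_Icc]; omega)
        rw [hmt, ← psFun_eq]
        linarith
    linarith

end Stmt15
namespace Stmt15

/-- events containing slot `τ` -/
def Epairs (c θ : ℝ) (T τ : ℕ) : Finset (ℕ × ℕ) :=
  ((Finset.Icc 1 T) ×ˢ (Finset.Icc 1 T)).filter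
    (fun p => p.1 ≤ τ ∧ τ ≤ p.2 ∧ algCond (fun _ => c) θ p.2 p.1)

def cntF (c θ : ℝ) (T τ t j : ℕ) : ℕ :=
  ((Epairs c θ T τ).filter (fun p => p.2 < t ∨ (p.2 = t ∧ p.1 ≤ j))).card

def Vf (c θ : ℝ) (τ t j : ℕ) : ℝ :=
  psFun (fun _ => c) θ t τ + innerLoop c θ (psFun (fun _ => c) θ t) j

def gf (c θ : ℝ) (m : ℕ) : ℝ := ((1 + 1/c)^m - 1)/θ

lemma gf_zero (c θ : ℝ) : gf c θ 0 = 0 := by simp [gf]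

lemma gf_succ (c θ : ℝ) (hc : 0 < c) (hθ : 0 < θ) (m : ℕ) :
    gf c θ (m+1) = (1 + 1/c) * gf c θ m + 1/(θ*c) := by
  have hc' : c ≠ 0 := ne_of_gt hc
  have hθ' : θ ≠ 0 := ne_of_gt hθ
  unfold gf
  rw [pow_succ]
  generalize (1 + 1/c)^m = x
  field_simp
  ring

lemma gf_lt_one (c θ : ℝ) (hc : 0 < c) (K : ℕ) (hθeq : θ = (1+1/c)^K - 1) (hθ : 0 < θ)
    (m : ℕ) (h : gf c θ m < 1) : m < K := by
  have hb : (1:ℝ) < 1 + 1/c := by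
    have : 0 < 1/c := by positivity
    linarith
  have h2 : (1+1/c)^m - 1 < θ := (div_lt_one hθ).1 h
  rw [hθeq] at h2
  have hpow : (1+1/c)^m < (1+1/c)^K := by linarith
  exact (pow_lt_pow_iff_right₀ hb).1 hpow


end Stmt15
namespace Stmt15

lemma mem_Epairs {c θ : ℝ} {T τ : ℕ} {p : ℕ × ℕ} :
    p ∈ Epairs c θ T τ ↔ (1 ≤ p.1 ∧ p.1 ≤ T) ∧ (1 ≤ p.2 ∧ p.2 ≤ T) ∧ p.1 ≤ τ ∧ τ ≤ p.2 ∧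
      algCond (fun _ => c) θ p.2 p.1 := by
  unfold Epairs
  simp only [Finset.mem_filter, Finset.mem_product, Finset.mem_Icc]
  tauto

lemma cntF_zero (c θ : ℝ) (T τ : ℕ) (hτ : 1 ≤ τ) : cntF c θ T τ τ 0 = 0 := by
  unfold cntF
  rw [Finset.card_eq_zero, Finset.filter_eq_empty_iff]
  intro p hp
  have h := mem_Epairs.1 hp
  push_neg
  exact ⟨by omega, fun h2 => by omega⟩

lemma cntF_succ (c θ : ℝ) (T τ t j : ℕ) (hj : j + 1 ≤ τ) (hτt : τ ≤ t) (htT : t ≤ T)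
    (hτ1 : 1 ≤ τ) :
    cntF c θ T τ t (j+1) =
      cntF c θ T τ t j + (if algCond (fun _ => c) θ t (j+1) then 1 else 0) := by
  unfold cntF
  by_cases hcond : algCond (fun _ => c) θ t (j+1)
  · rw [if_pos hcond]
    have hset : (Epairs c θ T τ).filter (fun p => p.2 < t ∨ (p.2 = t ∧ p.1 ≤ j+1))
        = insert ((j+1 : ℕ), t)
            ((Epairs c θ T τ).filter (fun p => p.2 < t ∨ (p.2 = t ∧ p.1 ≤ j))) := by
      ext p
      simp only [Finset.mem_filter, Finset.mem_insert]
      constructor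
      · rintro ⟨hpE, hP⟩
        rcases hP with h | ⟨h2, h1⟩
        · exact Or.inr ⟨hpE, Or.inl h⟩
        · rcases Nat.lt_or_ge p.1 (j+1) with hlt | hge
          · exact Or.inr ⟨hpE, Or.inr ⟨h2, by omega⟩⟩
          · left
            have hp1 : p.1 = j + 1 := by omega
            exact Prod.ext hp1 h2
      · rintro (rfl | ⟨hpE, hP⟩)
        · refine ⟨mem_Epairs.2 ?_, Or.inr ⟨rfl, le_refl _⟩⟩
          exact ⟨⟨by omega, by omega⟩, ⟨by omega, htT⟩, by omega, hτt, hcond⟩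
        · refine ⟨hpE, ?_⟩
          rcases hP with h | ⟨h2, h1⟩
          · exact Or.inl h
          · exact Or.inr ⟨h2, by omega⟩
    rw [hset, Finset.card_insert_of_notMem]
    simp only [Finset.mem_filter, not_and, not_or]
    intro _
    constructor
    · omega
    · intro h; omega
  · rw [if_neg hcond, add_zero]
    congr 1
    ext p
    simp only [Finset.mem_filter]
    constructor
    · rintro ⟨hpE, h | ⟨h2, h1⟩⟩
      · exact ⟨hpE, Or.inl h⟩
      · rcases Nat.lt_or_ge p.1 (j+1) with hlt | hge
        · exact ⟨hpE, Or.inr ⟨h2, by omega⟩⟩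
        · exfalso
          have hme := mem_Epairs.1 hpE
          have hp1 : p.1 = j+1 := by omega
          apply hcond
          have hac := hme.2.2.2.2
          rw [hp1, h2] at hac
          exact hac
    · rintro ⟨hpE, h | ⟨h2, h1⟩⟩
      · exact ⟨hpE, Or.inl h⟩
      · exact ⟨hpE, Or.inr ⟨h2, by omega⟩⟩

lemma cntF_cross (c θ : ℝ) (T τ t : ℕ) (hτt : τ ≤ t) :
    cntF c θ T τ (t+1) 0 = cntF c θ T τ t τ := by
  unfold cntF
  congr 1
  ext p
  simp only [Finset.mem_filter]
  constructor
  · rintro ⟨hpE, h | ⟨h2, h1⟩⟩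
    · have hme := mem_Epairs.1 hpE
      refine ⟨hpE, ?_⟩
      rcases Nat.lt_or_ge p.2 t with h' | h'
      · exact Or.inl h'
      · exact Or.inr ⟨by omega, hme.2.2.1⟩
    · exfalso
      have hme := mem_Epairs.1 hpE
      omega
  · rintro ⟨hpE, h | ⟨h2, h1⟩⟩
    · exact ⟨hpE, Or.inl (by omega)⟩
    · exact ⟨hpE, Or.inl (by omega)⟩

lemma cntF_top (c θ : ℝ) (T τ : ℕ) : cntF c θ T τ T τ = (Epairs c θ T τ).card := by
  unfold cntF
  congr 1
  rw [Finset.filter_true_of_mem]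
  intro p hp
  have hme := mem_Epairs.1 hp
  omega

lemma Vf_nonneg (c θ : ℝ) (hc : 0 < c) (hθ : 0 < θ) (τ t j : ℕ) : 0 ≤ Vf c θ τ t j := by
  unfold Vf
  have h1 := psFun_nonneg (fun _ => c) (fun _ => hc) hθ t τ
  have h2 := innerLoop_nonneg (c := c) hc hθ (psFun (fun _ => c) θ t)
    (psFun_nonneg (fun _ => c) (fun _ => hc) hθ t) j
  linarith

lemma Vf_zero_succ (c θ : ℝ) (hc : 0 < c) (hθ : 0 < θ) (τ t : ℕ) (hτt : τ ≤ t) (ht : 1 ≤ t) :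
    Vf c θ τ t τ ≤ Vf c θ τ (t+1) 0 := by
  unfold Vf
  rw [show innerLoop c θ (psFun (fun _ => c) θ (t+1)) 0 = 0 from rfl, add_zero]
  have hps1 : psFun (fun _ => c) θ (t+1) τ = psFun (fun _ => c) θ t τ + xval (fun _ => c) θ t := by
    rw [psFun_eq, psFun_eq, Finset.sum_Ico_succ_top hτt]
  rw [hps1]
  have hL : innerLoop c θ (psFun (fun _ => c) θ t) τ ≤ xval (fun _ => c) θ t := by
    rw [xval_eq_innerLoop _ _ t ht]
    exact innerLoop_mono (c := c) hc hθ _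
      (psFun_nonneg (fun _ => c) (fun _ => hc) hθ t) hτt
  linarith

lemma Vf_event (c θ : ℝ) (hc : 0 < c) (hθ : 0 < θ) (τ t j : ℕ) (hj : j+1 ≤ τ)
    (hcond : algCond (fun _ => c) θ t (j+1)) :
    (1 + 1/c) * Vf c θ τ t j + 1/(θ*c) ≤ Vf c θ τ t (j+1) ∧ Vf c θ τ t j < 1 := by
  set ps := psFun (fun _ => c) θ t with hps
  have hpsnn : ∀ i, 0 ≤ ps i := psFun_nonneg (fun _ => c) (fun _ => hc) hθ t
  have hcond' : ps (j+1) + innerLoop c θ ps j < 1 := by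
    have h := hcond
    unfold algCond at h
    simpa using h
  have hmono2 : ps τ ≤ ps (j+1) := by
    rw [hps, psFun_eq, psFun_eq]
    apply Finset.sum_le_sum_of_subset_of_nonneg
    · apply Finset.Ico_subset_Ico (by omega) le_rfl
    · intro σ _ _
      exact xval_nonneg (fun _ => c) (fun _ => hc) hθ σ
  have hLsucc : innerLoop c θ ps (j+1)
      = innerLoop c θ ps j + (ps (j+1) + innerLoop c θ ps j)/c + 1/(θ*c) := by
    rw [innerLoop_succ, if_pos hcond']
  constructor
  · unfold Vf
    rw [← hps, hLsucc]
    have hdiv : (ps τ + innerLoop c θ ps j)/c ≤ (ps (j+1) + innerLoop c θ ps j)/c := by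
      have hm := mul_le_mul_of_nonneg_right
        (show ps τ + innerLoop c θ ps j ≤ ps (j+1) + innerLoop c θ ps j by linarith)
        (inv_nonneg.2 hc.le)
      simpa [div_eq_mul_inv] using hm
    have hexp : (1 + 1/c) * (ps τ + innerLoop c θ ps j)
        = (ps τ + innerLoop c θ ps j) + (ps τ + innerLoop c θ ps j)/c := by
      field_simp
    linarith
  · unfold Vf
    rw [← hps]
    linarith

lemma dual_feasible (c θ : ℝ) (hc : 0 < c) (K : ℕ) (hθeq : θ = (1+1/c)^K - 1) (hθ : 0 < θ)
    (T τ : ℕ) (hτ : 1 ≤ τ) (hτT : τ ≤ T) :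
    (Epairs c θ T τ).card ≤ K := by
  have hps : ∀ t j, 0 ≤ psFun (fun _ => c) θ t j :=
    fun t => psFun_nonneg (fun _ => c) (fun _ => hc) hθ t
  have claimJ : ∀ t, τ ≤ t → t ≤ T →
      (cntF c θ T τ t 0 ≤ K ∧ gf c θ (cntF c θ T τ t 0) ≤ Vf c θ τ t 0) →
      ∀ j, j ≤ τ →
        cntF c θ T τ t j ≤ K ∧ gf c θ (cntF c θ T τ t j) ≤ Vf c θ τ t j := by
    intro t hτt htT hbase j
    induction j with
    | zero => intro _; exact hbase
    | succ j ih =>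
      intro hjτ
      obtain ⟨ihK, ihg⟩ := ih (by omega)
      rw [cntF_succ c θ T τ t j (by omega) hτt htT hτ]
      by_cases hcond : algCond (fun _ => c) θ t (j+1)
      · rw [if_pos hcond]
        obtain ⟨hstep, hlt⟩ := Vf_event c θ hc hθ τ t j (by omega) hcond
        have hcntlt : cntF c θ T τ t j < K :=
          gf_lt_one c θ hc K hθeq hθ _ (lt_of_le_of_lt ihg hlt)
        refine ⟨by omega, ?_⟩
        rw [gf_succ c θ hc hθ]
        have h1 : (0:ℝ) < 1 + 1/c := by positivity
        have h2 : (1 + 1/c) * gf c θ (cntF c θ T τ t j) ≤ (1 + 1/c) * Vf c θ τ t j :=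
          mul_le_mul_of_nonneg_left ihg h1.le
        linarith
      · rw [if_neg hcond, add_zero]
        refine ⟨ihK, le_trans ihg ?_⟩
        unfold Vf
        have := innerLoop_mono (c := c) hc hθ (psFun (fun _ => c) θ t) (hps t) (Nat.le_succ j)
        linarith
  have main : ∀ t, τ ≤ t → t ≤ T →
      cntF c θ T τ t τ ≤ K ∧ gf c θ (cntF c θ T τ t τ) ≤ Vf c θ τ t τ := by
    intro t ht
    induction t, ht using Nat.le_induction with
    | base =>
      intro hτT'
      refine claimJ τ le_rfl hτT' ⟨?_, ?_⟩ τ le_rfl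
      · rw [cntF_zero c θ T τ hτ]; omega
      · rw [cntF_zero c θ T τ hτ, gf_zero]
        exact Vf_nonneg c θ hc hθ τ τ 0
    | succ t ht ih =>
      intro htT
      obtain ⟨ihK, ihg⟩ := ih (by omega)
      refine claimJ (t+1) (by omega) htT ⟨?_, ?_⟩ τ le_rfl
      · rw [cntF_cross c θ T τ t ht]; exact ihK
      · rw [cntF_cross c θ T τ t ht]
        exact le_trans ihg (Vf_zero_succ c θ hc hθ τ t ht (by omega))
  have hfin := main T hτT le_rfl
  rw [cntF_top] at hfin
  exact hfin.1

end Stmt15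
namespace Stmt15

def ageSet (ind : ℕ → ℕ → ℕ → ℝ) (d : ℕ → ℕ) (i t : ℕ) : Finset ℕ :=
  (Finset.Icc 1 t).filter (fun j => ∀ τ ∈ Finset.Icc j t, ind i (d τ) τ ≠ 1)

lemma age_eq_card (ind : ℕ → ℕ → ℕ → ℝ) (d : ℕ → ℕ) (i : ℕ) :
    ∀ t, age ind d i t = (ageSet ind d i t).card := by
  intro t
  induction t with
  | zero => simp [age, ageSet]
  | succ t ih =>
    by_cases h : ind i (d (t+1)) (t+1) = 1
    · rw [show age ind d i (t+1) = 0 by simp [age, h]]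
      symm
      rw [Finset.card_eq_zero, Finset.eq_empty_iff_forall_notMem]
      intro j hj
      simp only [ageSet, Finset.mem_filter, Finset.mem_Icc] at hj
      exact hj.2 (t+1) ⟨hj.1.2, le_rfl⟩ h
    · have hset : ageSet ind d i (t+1) = insert (t+1) (ageSet ind d i t) := by
        ext j
        simp only [ageSet, Finset.mem_filter, Finset.mem_insert, Finset.mem_Icc]
        constructor
        · rintro ⟨⟨hj1, hj2⟩, hall⟩
          rcases Nat.lt_or_ge j (t+1) with hlt | hge
          · exact Or.inr ⟨⟨hj1, by omega⟩, fun τ hτ => hall τ ⟨hτ.1, hτ.2.trans (by omega)⟩⟩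
          · exact Or.inl (by omega)
        · rintro (rfl | ⟨⟨hj1, hj2⟩, hall⟩)
          · refine ⟨⟨by omega, le_rfl⟩, fun τ hτ => ?_⟩
            have hτ' : τ = t+1 := le_antisymm hτ.2 hτ.1
            rw [hτ']; exact h
          · refine ⟨⟨hj1, by omega⟩, fun τ hτ => ?_⟩
            rcases Nat.lt_or_ge τ (t+1) with hlt | hge
            · exact hall τ ⟨hτ.1, by omega⟩
            · have hτ' : τ = t+1 := le_antisymm hτ.2 hge
              rw [hτ']; exact h
      rw [show age ind d i (t+1) = age ind d i t + 1 by simp [age, h], ih, hset,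
        Finset.card_insert_of_notMem]
      simp only [ageSet, Finset.mem_filter, Finset.mem_Icc]
      intro hcontra
      omega

lemma weak_duality (c θ : ℝ) (hc : 0 < c) (K : ℕ) (hθeq : θ = (1+1/c)^K - 1) (hθ : 0 < θ)
    (N M T : ℕ) (hN : 1 ≤ N) (ind : ℕ → ℕ → ℕ → ℝ) (hzero : ∀ i t, ind i 0 t = 0)
    (C : ℕ → ℝ) (hKC : (K:ℝ) ≤ C 1) (hCpos : ∀ k, 1 ≤ k → k ≤ M → C 1 ≤ C k) (hC0 : C 0 = 0)
    (hC1 : 1 ≤ C 1)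
    (d : ℕ → ℕ) (hd : ∀ t, d t ≤ M) :
    (∑ t ∈ Finset.Icc 1 T,
        (((Finset.Icc 1 t).filter (fun j => algCond (fun _ => c) θ t j)).card : ℝ))
      ≤ ∑ t ∈ Finset.Icc 1 T,
          (C (d t) + (1/N) * ∑ i ∈ Finset.Icc 1 N, (age ind d i t : ℝ)) := by
  classical
  set Q : ℕ → ℕ → Prop := fun t j => ∃ τ ∈ Finset.Icc j t, 1 ≤ d τ with hQ
  set St : ℕ → Finset ℕ :=
    fun t => (Finset.Icc 1 t).filter (fun j => algCond (fun _ => c) θ t j) with hSt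
  -- split each card
  have hsplit : ∀ t, (St t).card = ((St t).filter (Q t)).card
      + ((St t).filter (fun j => ¬ Q t j)).card := by
    intro t
    exact (Finset.card_filter_add_card_filter_not (fun j => Q t j)).symm
  -- B part
  have hB : ∀ t ∈ Finset.Icc 1 T,
      (((St t).filter (fun j => ¬ Q t j)).card : ℝ)
        ≤ (1/N) * ∑ i ∈ Finset.Icc 1 N, (age ind d i t : ℝ) := by
    intro t _
    have hsub : ∀ i, ((St t).filter (fun j => ¬ Q t j)).card ≤ age ind d i t := by
      intro i
      rw [age_eq_card]
      apply Finset.card_le_card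
      intro j hj
      simp only [hSt, Finset.mem_filter, hQ] at hj
      obtain ⟨⟨hjI, _⟩, hnq⟩ := hj
      push_neg at hnq
      simp only [ageSet, Finset.mem_filter]
      refine ⟨hjI, fun τ hτ => ?_⟩
      have hd0 : d τ = 0 := by
        have := hnq τ hτ
        omega
      rw [hd0, hzero i τ]
      norm_num
    have hsum : (N : ℝ) * (((St t).filter (fun j => ¬ Q t j)).card : ℝ)
        ≤ ∑ i ∈ Finset.Icc 1 N, (age ind d i t : ℝ) := by
      calc (N:ℝ) * _ = ∑ _i ∈ Finset.Icc 1 N, (((St t).filter (fun j => ¬ Q t j)).card : ℝ) := by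
            rw [Finset.sum_const, Nat.card_Icc]
            simp [nsmul_eq_mul]
        _ ≤ _ := Finset.sum_le_sum fun i _ => by exact_mod_cast hsub i
    have hNpos : (0:ℝ) < N := by exact_mod_cast hN
    rw [show (1/(N:ℝ)) * (∑ i ∈ Finset.Icc 1 N, (age ind d i t : ℝ))
        = (∑ i ∈ Finset.Icc 1 N, (age ind d i t : ℝ)) / N by ring, le_div_iff₀ hNpos]
    calc (((St t).filter (fun j => ¬ Q t j)).card : ℝ) * N
        = (N:ℝ) * (((St t).filter (fun j => ¬ Q t j)).card : ℝ) := by ring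
      _ ≤ _ := hsum
  -- A part
  set Apairs : Finset (ℕ × ℕ) := ((Finset.Icc 1 T) ×ˢ (Finset.Icc 1 T)).filter
    (fun p => p.1 ≤ p.2 ∧ algCond (fun _ => c) θ p.2 p.1 ∧ Q p.2 p.1) with hAp
  have hfiber : ∑ t ∈ Finset.Icc 1 T, ((St t).filter (Q t)).card = Apairs.card := by
    have hmap : ∀ p ∈ Apairs, p.2 ∈ Finset.Icc 1 T := by
      intro p hp
      simp only [hAp, Finset.mem_filter, Finset.mem_product] at hp
      exact hp.1.2
    rw [Finset.card_eq_sum_card_fiberwise hmap]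
    apply Finset.sum_congr rfl
    intro t htI
    have htI' := Finset.mem_Icc.1 htI
    apply Finset.card_bij (i := fun j _ => ((j, t) : ℕ × ℕ))
    · intro j hj
      simp only [hSt, Finset.mem_filter, Finset.mem_Icc] at hj
      simp only [hAp, Finset.mem_filter, Finset.mem_product, Finset.mem_Icc]
      exact ⟨⟨⟨⟨hj.1.1.1, le_trans hj.1.1.2 htI'.2⟩, htI'⟩, hj.1.1.2, hj.1.2, hj.2⟩, trivial⟩
    · intro j1 h1 j2 h2 heq
      simpa using congrArg Prod.fst heq
    · intro p hp
      simp only [hAp, Finset.mem_filter, Finset.mem_product, Finset.mem_Icc] at hp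
      obtain ⟨⟨⟨⟨hp11, hp12⟩, hp21, hp22⟩, hle, hcond, hq⟩, hpt⟩ := hp
      subst hpt
      refine ⟨p.1, ?_, ?_⟩
      · simp only [hSt, Finset.mem_filter, Finset.mem_Icc]
        exact ⟨⟨⟨hp11, hle⟩, hcond⟩, hq⟩
      · exact Prod.mk.eta
  set Tx : Finset ℕ := (Finset.Icc 1 T).filter (fun τ => 1 ≤ d τ) with hTx
  have hAsub : Apairs ⊆ Tx.biUnion (fun τ => Epairs c θ T τ) := by
    intro p hp
    simp only [hAp, Finset.mem_filter, Finset.mem_product, Finset.mem_Icc] at hp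
    obtain ⟨⟨⟨hp11, hp12⟩, hp21, hp22⟩, hle, hcond, hq⟩ := hp
    obtain ⟨τ, hτI, hdτ⟩ := hq
    simp only [Finset.mem_Icc] at hτI
    rw [Finset.mem_biUnion]
    refine ⟨τ, ?_, ?_⟩
    · simp only [hTx, Finset.mem_filter, Finset.mem_Icc]
      exact ⟨⟨by omega, by omega⟩, hdτ⟩
    · exact mem_Epairs.2 ⟨⟨hp11, hp12⟩, ⟨hp21, hp22⟩, hτI.1, hτI.2, hcond⟩
  have hAcard : Apairs.card ≤ ∑ τ ∈ Tx, K := by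
    calc Apairs.card ≤ (Tx.biUnion (fun τ => Epairs c θ T τ)).card :=
          Finset.card_le_card hAsub
      _ ≤ ∑ τ ∈ Tx, (Epairs c θ T τ).card := Finset.card_biUnion_le
      _ ≤ ∑ τ ∈ Tx, K := by
          apply Finset.sum_le_sum
          intro τ hτ
          simp only [hTx, Finset.mem_filter, Finset.mem_Icc] at hτ
          exact dual_feasible c θ hc K hθeq hθ T τ hτ.1.1 hτ.1.2
  have hCd_nonneg : ∀ t, 0 ≤ C (d t) := by
    intro t
    rcases Nat.eq_zero_or_pos (d t) with h0 | h1
    · rw [h0, hC0]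
    · have := hCpos (d t) h1 (hd t)
      linarith
  have hA : (Apairs.card : ℝ) ≤ ∑ t ∈ Finset.Icc 1 T, C (d t) := by
    calc (Apairs.card : ℝ) ≤ (∑ τ ∈ Tx, K : ℕ) := by exact_mod_cast hAcard
      _ = ∑ τ ∈ Tx, (K:ℝ) := by push_cast; ring
      _ ≤ ∑ τ ∈ Tx, C (d τ) := by
          apply Finset.sum_le_sum
          intro τ hτ
          simp only [hTx, Finset.mem_filter] at hτ
          exact le_trans hKC (hCpos (d τ) hτ.2 (hd τ))
      _ ≤ ∑ τ ∈ Finset.Icc 1 T, C (d τ) := by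
          apply Finset.sum_le_sum_of_subset_of_nonneg (Finset.filter_subset _ _)
          intro τ _ _
          exact hCd_nonneg τ
  -- combine
  calc (∑ t ∈ Finset.Icc 1 T, ((St t).card : ℝ))
      = ∑ t ∈ Finset.Icc 1 T, ((((St t).filter (Q t)).card : ℝ)
        + (((St t).filter (fun j => ¬ Q t j)).card : ℝ)) := by
        apply Finset.sum_congr rfl
        intro t _
        rw [hsplit t]
        push_cast
        ring
    _ = (∑ t ∈ Finset.Icc 1 T, (((St t).filter (Q t)).card : ℝ))
        + ∑ t ∈ Finset.Icc 1 T, (((St t).filter (fun j => ¬ Q t j)).card : ℝ) :=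
        Finset.sum_add_distrib
    _ ≤ (∑ t ∈ Finset.Icc 1 T, C (d t))
        + ∑ t ∈ Finset.Icc 1 T, (1/N) * ∑ i ∈ Finset.Icc 1 N, (age ind d i t : ℝ) := by
        apply add_le_add
        · have : (∑ t ∈ Finset.Icc 1 T, (((St t).filter (Q t)).card : ℝ))
              = (Apairs.card : ℝ) := by exact_mod_cast hfiber
          rw [this]
          exact hA
        · exact Finset.sum_le_sum hB
    _ = _ := Finset.sum_add_distrib.symm

end Stmt15
namespace Stmt15

open MeasureTheory Set

/-- the "transmission window" set for the interval [a,b) -/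
def trset (a b : ℝ) : Set ℝ := {u : ℝ | ∃ k : ℕ, a ≤ u + k ∧ u + k < b}

lemma trset_eq_iUnion (a b : ℝ) : trset a b = ⋃ k : ℕ, Set.Ico (a - k) (b - k) := by
  ext u
  simp only [trset, Set.mem_setOf_eq, Set.mem_iUnion, Set.mem_Ico]
  constructor
  · rintro ⟨k, h1, h2⟩; exact ⟨k, by linarith, by linarith⟩
  · rintro ⟨k, h1, h2⟩; exact ⟨k, by linarith, by linarith⟩

lemma trset_measurable (a b : ℝ) : MeasurableSet (trset a b) := by
  rw [trset_eq_iUnion]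
  exact MeasurableSet.iUnion fun k => measurableSet_Ico

/-- the witness-k piece, intersected with [0,1) -/
lemma piece_eq (a b : ℝ) (k : ℕ) :
    Set.Ico (0:ℝ) 1 ∩ {u : ℝ | a ≤ u + k ∧ u + k < b}
      = (fun u : ℝ => u + k) ⁻¹' (Set.Ico a b ∩ Set.Ico (k:ℝ) (k+1)) := by
  ext u
  simp only [Set.mem_inter_iff, Set.mem_Ico, Set.mem_setOf_eq, Set.mem_preimage]
  constructor
  · rintro ⟨⟨h0, h1⟩, h2, h3⟩
    exact ⟨⟨h2, h3⟩, by linarith, by linarith⟩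
  · rintro ⟨⟨h2, h3⟩, h4, h5⟩
    exact ⟨⟨by linarith, by linarith⟩, h2, h3⟩

lemma piece_vol (a b : ℝ) (k : ℕ) :
    volume (Set.Ico (0:ℝ) 1 ∩ {u : ℝ | a ≤ u + k ∧ u + k < b})
      = volume (Set.Ico a b ∩ Set.Ico (k:ℝ) (k+1)) := by
  rw [piece_eq, measure_preimage_add_right]

lemma unit_disjoint (n : ℕ) (a b : ℝ) :
    Set.PairwiseDisjoint (↑(Finset.range n) : Set ℕ)
      (fun k : ℕ => Set.Ico a b ∩ Set.Ico (k:ℝ) (k+1)) := by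
  intro k _ k' _ hkk'
  apply Set.disjoint_left.2
  rintro u ⟨_, h1, h2⟩ ⟨_, h3, h4⟩
  have : k = k' := by
    have hk : (k:ℝ) ≤ u := h1
    have hk' : (k':ℝ) ≤ u := h3
    have hk2 : u < k + 1 := h2
    have hk2' : u < k' + 1 := h4
    have e1 : (k:ℝ) < k' + 1 := lt_of_le_of_lt hk hk2'
    have e2 : (k':ℝ) < k + 1 := lt_of_le_of_lt hk' hk2
    have e1' : k < k' + 1 := by exact_mod_cast e1
    have e2' : k' < k + 1 := by exact_mod_cast e2
    omega
  exact hkk' this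

lemma union_unit_pieces (a b : ℝ) (n : ℕ) (ha : 0 ≤ a) (hb : b ≤ n) :
    ⋃ k ∈ Finset.range n, (Set.Ico a b ∩ Set.Ico (k:ℝ) (k+1)) = Set.Ico a b := by
  apply Set.Subset.antisymm
  · intro u hu
    simp only [Set.mem_iUnion] at hu
    obtain ⟨k, _, hk, _⟩ := hu
    exact hk
  · intro u hu
    obtain ⟨h1, h2⟩ := hu
    have h0 : 0 ≤ u := le_trans ha h1
    have hfl : (⌊u⌋₊ : ℝ) ≤ u := Nat.floor_le h0
    have hfn : ⌊u⌋₊ < n := by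
      have : (⌊u⌋₊ : ℝ) < n := lt_of_le_of_lt hfl (lt_of_lt_of_le h2 hb)
      exact_mod_cast this
    refine Set.mem_biUnion (Finset.mem_range.2 hfn) ?_
    exact ⟨⟨h1, h2⟩, hfl, Nat.lt_floor_add_one u⟩

lemma sum_unit_pieces (a b : ℝ) (n : ℕ) (ha : 0 ≤ a) (hb : b ≤ n) :
    ∑ k ∈ Finset.range n, volume (Set.Ico a b ∩ Set.Ico (k:ℝ) (k+1))
      = ENNReal.ofReal (b - a) := by
  rw [← measure_biUnion_finset (unit_disjoint n a b)
    (fun k _ => measurableSet_Ico.inter measurableSet_Ico)]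
  rw [union_unit_pieces a b n ha hb, Real.volume_Ico]

lemma vol_trset_upper (a b : ℝ) (ha : 0 ≤ a) (hab : a ≤ b) :
    volume (trset a b ∩ Set.Ico (0:ℝ) 1) ≤ ENNReal.ofReal (b - a) := by
  set n := ⌈b⌉₊ with hn
  have hsub : trset a b ∩ Set.Ico (0:ℝ) 1
      ⊆ ⋃ k ∈ Finset.range n, (Set.Ico (0:ℝ) 1 ∩ {u : ℝ | a ≤ u + k ∧ u + k < b}) := by
    rintro u ⟨⟨k, h1, h2⟩, hu⟩
    have hkn : k < n := by
      have h3 : (k:ℝ) ≤ u + k := by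
        have := hu.1; linarith
      have h4 : (k:ℝ) < b := lt_of_le_of_lt h3 h2
      have h5 : (k:ℝ) < ⌈b⌉₊ := lt_of_lt_of_le h4 (Nat.le_ceil b)
      exact_mod_cast h5
    exact Set.mem_biUnion (Finset.mem_range.2 hkn) ⟨hu, h1, h2⟩
  calc volume (trset a b ∩ Set.Ico (0:ℝ) 1)
      ≤ volume (⋃ k ∈ Finset.range n, (Set.Ico (0:ℝ) 1 ∩ {u : ℝ | a ≤ u + k ∧ u + k < b})) :=
        measure_mono hsub
    _ ≤ ∑ k ∈ Finset.range n, volume (Set.Ico (0:ℝ) 1 ∩ {u : ℝ | a ≤ u + k ∧ u + k < b}) :=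
        measure_biUnion_finset_le _ _
    _ = ∑ k ∈ Finset.range n, volume (Set.Ico a b ∩ Set.Ico (k:ℝ) (k+1)) :=
        Finset.sum_congr rfl (fun k _ => piece_vol a b k)
    _ = ENNReal.ofReal (b - a) := sum_unit_pieces a b n ha (Nat.le_ceil b)

lemma vol_trset_lower (a b : ℝ) (ha : 0 ≤ a) (hab : a ≤ b) :
    ENNReal.ofReal (min (b - a) 1) ≤ volume (trset a b ∩ Set.Ico (0:ℝ) 1) := by
  rcases le_or_gt 1 (b - a) with hge | hlt
  · -- the set contains all of [0,1)
    have hsub : Set.Ico (0:ℝ) 1 ⊆ trset a b ∩ Set.Ico (0:ℝ) 1 := by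
      rintro u ⟨h0, h1⟩
      refine ⟨⟨(⌈a - u⌉).toNat, ?_, ?_⟩, h0, h1⟩
      · rcases le_or_gt (a - u) 0 with hneg | hpos
        · have : (0:ℝ) ≤ ((⌈a - u⌉).toNat : ℝ) := by positivity
          linarith
        · have h2 : (a - u) ≤ (⌈a - u⌉ : ℝ) := Int.le_ceil _
          have h3 : ((⌈a - u⌉).toNat : ℤ) = ⌈a - u⌉ :=
            Int.toNat_of_nonneg (by positivity)
          have h4 : ((⌈a - u⌉).toNat : ℝ) = ((⌈a - u⌉ : ℤ) : ℝ) := by exact_mod_cast h3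
          rw [h4]; linarith
      · rcases le_or_gt (a - u) 0 with hneg | hpos
        · have h5 : ⌈a - u⌉ ≤ 0 := Int.ceil_le.2 (by push_cast; linarith)
          have h6 : (⌈a - u⌉).toNat = 0 := Int.toNat_of_nonpos h5
          rw [h6]
          push_cast
          linarith
        · have h2 : (⌈a - u⌉ : ℝ) < (a - u) + 1 := Int.ceil_lt_add_one _
          have h3 : ((⌈a - u⌉).toNat : ℤ) = ⌈a - u⌉ :=
            Int.toNat_of_nonneg (by positivity)
          have h4 : ((⌈a - u⌉).toNat : ℝ) = ((⌈a - u⌉ : ℤ) : ℝ) := by exact_mod_cast h3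
          rw [h4]
          linarith
    calc ENNReal.ofReal (min (b - a) 1) ≤ ENNReal.ofReal 1 := by
          apply ENNReal.ofReal_le_ofReal
          exact min_le_right _ _
      _ = volume (Set.Ico (0:ℝ) 1) := by rw [Real.volume_Ico]; norm_num
      _ ≤ _ := measure_mono hsub
  · -- b - a < 1 : disjoint pieces
    set n := ⌈b⌉₊ with hn
    have hPdisj : Set.PairwiseDisjoint (↑(Finset.range n) : Set ℕ)
        (fun k : ℕ => Set.Ico (0:ℝ) 1 ∩ {u : ℝ | a ≤ u + k ∧ u + k < b}) := by
      intro k _ k' _ hkk'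
      apply Set.disjoint_left.2
      rintro u ⟨_, h1, h2⟩ ⟨_, h3, h4⟩
      have e1 : (k:ℝ) < k' + 1 := by linarith
      have e2 : (k':ℝ) < k + 1 := by linarith
      have e1' : k < k' + 1 := by exact_mod_cast e1
      have e2' : k' < k + 1 := by exact_mod_cast e2
      exact hkk' (by omega)
    have hmeas : ∀ k : ℕ, MeasurableSet {u : ℝ | a ≤ u + k ∧ u + k < b} := by
      intro k
      have : {u : ℝ | a ≤ u + k ∧ u + k < b} = Set.Ico (a - k) (b - k) := by
        ext u
        simp only [Set.mem_setOf_eq, Set.mem_Ico]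
        constructor
        · rintro ⟨h1, h2⟩; exact ⟨by linarith, by linarith⟩
        · rintro ⟨h1, h2⟩; exact ⟨by linarith, by linarith⟩
      rw [this]; exact measurableSet_Ico
    have hsub : (⋃ k ∈ Finset.range n, (Set.Ico (0:ℝ) 1 ∩ {u : ℝ | a ≤ u + k ∧ u + k < b}))
        ⊆ trset a b ∩ Set.Ico (0:ℝ) 1 := by
      intro u hu
      simp only [Set.mem_iUnion] at hu
      obtain ⟨k, _, hI, hk⟩ := hu
      exact ⟨⟨k, hk⟩, hI⟩
    calc ENNReal.ofReal (min (b - a) 1) = ENNReal.ofReal (b - a) := by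
          rw [min_eq_left hlt.le]
      _ = ∑ k ∈ Finset.range n, volume (Set.Ico a b ∩ Set.Ico (k:ℝ) (k+1)) :=
          (sum_unit_pieces a b n ha (Nat.le_ceil b)).symm
      _ = ∑ k ∈ Finset.range n, volume (Set.Ico (0:ℝ) 1 ∩ {u : ℝ | a ≤ u + k ∧ u + k < b}) :=
          Finset.sum_congr rfl (fun k _ => (piece_vol a b k).symm)
      _ = volume (⋃ k ∈ Finset.range n, (Set.Ico (0:ℝ) 1 ∩ {u : ℝ | a ≤ u + k ∧ u + k < b})) :=
          (measure_biUnion_finset hPdisj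
            (fun k _ => measurableSet_Ico.inter (hmeas k))).symm
      _ ≤ _ := measure_mono hsub

end Stmt15
namespace Stmt15

lemma transmits_iff_mem (Ck : ℕ → ℝ) (θ : ℝ) (u : ℝ) (t : ℕ) :
    transmits Ck θ u t ↔ u ∈ trset (bigX Ck θ (t-1)) (bigX Ck θ t) := Iff.rfl

lemma Icc_one_eq_Ioc (n : ℕ) : Finset.Icc 1 n = Finset.Ioc 0 n := by
  ext x
  simp only [Finset.mem_Icc, Finset.mem_Ioc]
  omega

lemma bigX_nonneg (c θ : ℝ) (hc : 0 < c) (hθ : 0 < θ) (t : ℕ) :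
    0 ≤ bigX (fun _ => c) θ t := by
  apply Finset.sum_nonneg
  intro τ _
  exact le_min (xval_nonneg (fun _ => c) (fun _ => hc) hθ τ) zero_le_one

lemma bigX_mono (c θ : ℝ) (hc : 0 < c) (hθ : 0 < θ) {m n : ℕ} (h : m ≤ n) :
    bigX (fun _ => c) θ m ≤ bigX (fun _ => c) θ n := by
  apply Finset.sum_le_sum_of_subset_of_nonneg
  · exact Finset.Icc_subset_Icc le_rfl h
  · intro τ _ _
    exact le_min (xval_nonneg (fun _ => c) (fun _ => hc) hθ τ) zero_le_one

lemma bigX_split (c θ : ℝ) (j t : ℕ) (hj : 1 ≤ j) (hjt : j ≤ t) :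
    bigX (fun _ => c) θ t = bigX (fun _ => c) θ (j-1)
      + ∑ τ ∈ Finset.Icc j t, min (xval (fun _ => c) θ τ) 1 := by
  unfold bigX
  rw [Icc_one_eq_Ioc, Icc_one_eq_Ioc,
    show Finset.Icc j t = Finset.Ioc (j-1) t from by
      ext x; simp only [Finset.mem_Icc, Finset.mem_Ioc]; omega]
  exact (Finset.sum_Ioc_consecutive _ (by omega) (by omega)).symm

lemma bigX_diff (c θ : ℝ) (t : ℕ) (ht : 1 ≤ t) :
    bigX (fun _ => c) θ t = bigX (fun _ => c) θ (t-1) + min (xval (fun _ => c) θ t) 1 := by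
  rw [bigX_split c θ t t ht le_rfl, Finset.Icc_self, Finset.sum_singleton]

lemma window_iff (c θ : ℝ) (hc : 0 < c) (hθ : 0 < θ) (u : ℝ) (j t : ℕ)
    (hj : 1 ≤ j) (hjt : j ≤ t) :
    (∃ τ ∈ Finset.Icc j t, transmits (fun _ => c) θ u τ)
      ↔ u ∈ trset (bigX (fun _ => c) θ (j-1)) (bigX (fun _ => c) θ t) := by
  constructor
  · rintro ⟨τ, hτ, k, h1, h2⟩
    obtain ⟨hτ1, hτ2⟩ := Finset.mem_Icc.1 hτ
    refine ⟨k, ?_, ?_⟩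
    · exact le_trans (bigX_mono c θ hc hθ (by omega)) h1
    · exact lt_of_lt_of_le h2 (bigX_mono c θ hc hθ hτ2)
  · rintro ⟨k, h1, h2⟩
    set Sf : Finset ℕ := (Finset.Icc j t).filter
      (fun τ => u + k < bigX (fun _ => c) θ τ) with hSf
    have hSne : Sf.Nonempty := ⟨t, by
      simp only [hSf, Finset.mem_filter, Finset.mem_Icc]
      exact ⟨⟨hjt, le_rfl⟩, h2⟩⟩
    set τ0 := Sf.min' hSne with hτ0
    have hτ0mem : τ0 ∈ Sf := Finset.min'_mem _ _
    have hτ0I : τ0 ∈ Finset.Icc j t := (Finset.mem_filter.1 hτ0mem).1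
    have hτ0lt : u + k < bigX (fun _ => c) θ τ0 := (Finset.mem_filter.1 hτ0mem).2
    obtain ⟨hτ01, hτ02⟩ := Finset.mem_Icc.1 hτ0I
    refine ⟨τ0, hτ0I, k, ?_, hτ0lt⟩
    rcases Nat.eq_or_lt_of_le hτ01 with heq | hlt
    · rw [← heq]
      exact h1
    · -- j < τ0, so τ0 - 1 ∈ Icc j t and τ0 - 1 ∉ Sf by minimality
      by_contra hcon
      push_neg at hcon
      have hmem : τ0 - 1 ∈ Sf := by
        simp only [hSf, Finset.mem_filter, Finset.mem_Icc]
        exact ⟨⟨by omega, by omega⟩, hcon⟩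
      have := Finset.min'_le _ _ hmem
      omega

lemma wset_eq_compl (c θ : ℝ) (hc : 0 < c) (hθ : 0 < θ) (j t : ℕ) (hj : 1 ≤ j) (hjt : j ≤ t) :
    {u : ℝ | ∀ τ ∈ Finset.Icc j t, ¬ transmits (fun _ => c) θ u τ}
      = (trset (bigX (fun _ => c) θ (j-1)) (bigX (fun _ => c) θ t))ᶜ := by
  ext u
  simp only [Set.mem_setOf_eq, Set.mem_compl_iff]
  rw [← window_iff c θ hc hθ u j t hj hjt]
  push_neg
  rfl

lemma ind_integral (S : Set ℝ) (hS : MeasurableSet S) :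
    ∫ u in Set.Ico (0:ℝ) 1, S.indicator (fun _ => (1:ℝ)) u
      = (volume (S ∩ Set.Ico (0:ℝ) 1)).toReal := by
  rw [MeasureTheory.setIntegral_indicator hS, MeasureTheory.setIntegral_const,
    Set.inter_comm, smul_eq_mul, mul_one, MeasureTheory.measureReal_def]

lemma ind_integrable (S : Set ℝ) (hS : MeasurableSet S) :
    MeasureTheory.IntegrableOn (S.indicator (fun _ => (1:ℝ))) (Set.Ico (0:ℝ) 1) := by
  apply MeasureTheory.Integrable.indicator
  · apply MeasureTheory.integrable_const
  · exact hS

lemma vol_trset_ne_top (a b : ℝ) : volume (trset a b ∩ Set.Ico (0:ℝ) 1) ≠ ⊤ := by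
  apply ne_of_lt
  calc volume (trset a b ∩ Set.Ico (0:ℝ) 1) ≤ volume (Set.Ico (0:ℝ) 1) :=
        measure_mono Set.inter_subset_right
    _ < ⊤ := by rw [Real.volume_Ico]; norm_num

lemma vol_wset_toReal (c θ : ℝ) (hc : 0 < c) (hθ : 0 < θ) (j t : ℕ) (hj : 1 ≤ j) (hjt : j ≤ t) :
    (volume ({u : ℝ | ∀ τ ∈ Finset.Icc j t, ¬ transmits (fun _ => c) θ u τ}
        ∩ Set.Ico (0:ℝ) 1)).toReal
      = 1 - (volume (trset (bigX (fun _ => c) θ (j-1)) (bigX (fun _ => c) θ t)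
        ∩ Set.Ico (0:ℝ) 1)).toReal := by
  set a := bigX (fun _ => c) θ (j-1)
  set b := bigX (fun _ => c) θ t
  rw [wset_eq_compl c θ hc hθ j t hj hjt]
  have hdiff : (trset a b)ᶜ ∩ Set.Ico (0:ℝ) 1
      = Set.Ico (0:ℝ) 1 \ (trset a b ∩ Set.Ico (0:ℝ) 1) := by
    ext u
    simp only [Set.mem_inter_iff, Set.mem_compl_iff, Set.mem_diff]
    tauto
  rw [hdiff, measure_diff Set.inter_subset_right
    ((trset_measurable a b).inter measurableSet_Ico).nullMeasurableSet
    (vol_trset_ne_top a b)]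
  rw [ENNReal.toReal_sub_of_le (measure_mono Set.inter_subset_right)
    (by rw [Real.volume_Ico]; norm_num)]
  rw [Real.volume_Ico]
  norm_num

end Stmt15
namespace Stmt15

lemma wset_measurable (c θ : ℝ) (hc : 0 < c) (hθ : 0 < θ) (j t : ℕ) (hj : 1 ≤ j) (hjt : j ≤ t) :
    MeasurableSet {u : ℝ | ∀ τ ∈ Finset.Icc j t, ¬ transmits (fun _ => c) θ u τ} := by
  rw [wset_eq_compl c θ hc hθ j t hj hjt]
  exact (trset_measurable _ _).compl

end Stmt15

/-- channel-agnostic competitive ratio: fixing `k*_t = M` in every slot (so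
the `x`-recursion uses `C_M` and every transmission uses power level `M`), for every channel
state pattern, the expected total cost (over `u` uniform on `[0,1)`) satisfies
`E[J(s, channel-agnostic)] ≤ (1 + 1/((1 + 1/C_M)^⌊C_1⌋ − 1)) · OPT(s)`. -/
theorem stmt15 (N M T : ℕ) (hN : 1 ≤ N) (hM : 1 ≤ M) (hT : 1 ≤ T)
    (ind : ℕ → ℕ → ℕ → ℝ)
    (hind01 : ∀ i k t, ind i k t = 0 ∨ ind i k t = 1)
    (hmono : ∀ i k k' t, k ≤ k' → ind i k t = 1 → ind i k' t = 1)
    (hcov : ∀ i t, ind i M t = 1)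
    (hzero : ∀ i t, ind i 0 t = 0)
    (C : ℕ → ℝ) (hC0 : C 0 = 0) (hC1 : 1 ≤ C 1)
    (hCmono : ∀ k k', 1 ≤ k → k ≤ k' → k' ≤ M → C k ≤ C k') :
    (∫ u in Set.Ico (0 : ℝ) 1,
        ∑ t ∈ Finset.Icc 1 T,
          (C (dCA M (fun _ => C M) (thetaOf C M) u t)
            + (1 / N) * ∑ i ∈ Finset.Icc 1 N,
                (age ind (dCA M (fun _ => C M) (thetaOf C M) u) i t : ℝ)))
      ≤ (1 + 1 / ((1 + 1 / C M) ^ ⌊C 1⌋ - 1))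
          * sInf {c : ℝ | ∃ d : ℕ → ℕ, (∀ t, d t ≤ M) ∧
              c = ∑ t ∈ Finset.Icc 1 T,
                    (C (d t) + (1 / N) * ∑ i ∈ Finset.Icc 1 N, (age ind d i t : ℝ))} := by

  classical
  open Stmt15 in
  set θ : ℝ := thetaOf C M with hθdef
  set K : ℕ := (⌊C 1⌋).toNat with hKdef
  have hc1 : (1:ℝ) ≤ C M := le_trans hC1 (hCmono 1 M le_rfl hM le_rfl)
  have hc : (0:ℝ) < C M := lt_of_lt_of_le one_pos hc1
  have hfl1 : (1:ℤ) ≤ ⌊C 1⌋ := Int.le_floor.2 (by exact_mod_cast hC1)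
  have hK1 : 1 ≤ K := by omega
  have hKZ : (K : ℤ) = ⌊C 1⌋ := Int.toNat_of_nonneg (by omega)
  have hθeq : θ = (1 + 1/(C M))^K - 1 := by
    rw [hθdef]
    unfold thetaOf
    rw [← hKZ, zpow_natCast]
  have hb1 : (1:ℝ) < 1 + 1/(C M) := by
    have : (0:ℝ) < 1/(C M) := by positivity
    linarith
  have hθpos : 0 < θ := by
    rw [hθeq]
    have h := one_lt_pow₀ hb1 (by omega : K ≠ 0)
    linarith
  have hKC : (K:ℝ) ≤ C 1 := by
    have h1 : ((K:ℤ):ℝ) ≤ C 1 := by rw [hKZ]; exact Int.floor_le _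
    exact_mod_cast h1
  have hCpos : ∀ k, 1 ≤ k → k ≤ M → C 1 ≤ C k := fun k h1 h2 => hCmono 1 k le_rfl h1 h2
  -- pointwise identity of the integrand
  have hpt : ∀ u : ℝ,
      (∑ t ∈ Finset.Icc 1 T,
          (C (dCA M (fun _ => C M) θ u t)
            + (1 / N) * ∑ i ∈ Finset.Icc 1 N, (age ind (dCA M (fun _ => C M) θ u) i t : ℝ)))
      = ∑ t ∈ Finset.Icc 1 T,
          ((C M) * (trset (bigX (fun _ => C M) θ (t-1)) (bigX (fun _ => C M) θ t)).indicator
              (fun _ => (1:ℝ)) u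
           + ∑ j ∈ Finset.Icc 1 t,
              ({u' : ℝ | ∀ τ ∈ Finset.Icc j t, ¬ transmits (fun _ => C M) θ u' τ}).indicator
                (fun _ => (1:ℝ)) u) := by
    intro u
    apply Finset.sum_congr rfl
    intro t htmem
    congr 1
    · by_cases htr : transmits (fun _ => C M) θ u t
      · rw [show dCA M (fun _ => C M) θ u t = M from if_pos htr,
          Set.indicator_of_mem ((transmits_iff_mem (fun _ => C M) θ u t).1 htr)]
        ring
      · rw [show dCA M (fun _ => C M) θ u t = 0 from if_neg htr,
          Set.indicator_of_notMem
            (fun hmem => htr ((transmits_iff_mem (fun _ => C M) θ u t).2 hmem)), hC0]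
        ring
    · have hagesame : ∀ i, (age ind (dCA M (fun _ => C M) θ u) i t : ℝ)
          = ∑ j ∈ Finset.Icc 1 t,
              ({u' : ℝ | ∀ τ ∈ Finset.Icc j t, ¬ transmits (fun _ => C M) θ u' τ}).indicator
                (fun _ => (1:ℝ)) u := by
        intro i
        rw [age_eq_card]
        have hset : ageSet ind (dCA M (fun _ => C M) θ u) i t
            = (Finset.Icc 1 t).filter
                (fun j => ∀ τ ∈ Finset.Icc j t, ¬ transmits (fun _ => C M) θ u τ) := by
          unfold ageSet
          apply Finset.filter_congr
          intro j _
          constructor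
          · intro hall τ hτ htr
            apply hall τ hτ
            rw [show dCA M (fun _ => C M) θ u τ = M from if_pos htr]
            exact hcov i τ
          · intro hall τ hτ
            by_cases htr : transmits (fun _ => C M) θ u τ
            · exact absurd htr (hall τ hτ)
            · rw [show dCA M (fun _ => C M) θ u τ = 0 from if_neg htr, hzero i τ]
              norm_num
        rw [hset, Finset.card_filter]
        push_cast
        apply Finset.sum_congr rfl
        intro j _
        by_cases hj : ∀ τ ∈ Finset.Icc j t, ¬ transmits (fun _ => C M) θ u τ
        · rw [if_pos hj]
          exact (Set.indicator_of_mem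
            (show u ∈ {u' : ℝ | ∀ τ ∈ Finset.Icc j t, ¬ transmits (fun _ => C M) θ u' τ} from hj)
            (fun _ => (1:ℝ))).symm
        · rw [if_neg hj]
          exact (Set.indicator_of_notMem
            (show u ∉ {u' : ℝ | ∀ τ ∈ Finset.Icc j t, ¬ transmits (fun _ => C M) θ u' τ} from hj)
            (fun _ => (1:ℝ))).symm
      rw [Finset.sum_congr rfl (fun i _ => hagesame i), Finset.sum_const, Nat.card_Icc]
      simp only [nsmul_eq_mul, Nat.add_sub_cancel]
      have hN' : (N:ℝ) ≠ 0 := by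
        have : (0:ℝ) < N := by exact_mod_cast hN
        linarith
      field_simp
  simp only [hpt]
  -- split the integral
  have hWmeas : ∀ t ∈ Finset.Icc 1 T, ∀ j ∈ Finset.Icc 1 t,
      MeasurableSet {u' : ℝ | ∀ τ ∈ Finset.Icc j t, ¬ transmits (fun _ => C M) θ u' τ} := by
    intro t htm j hjm
    obtain ⟨h1, h2⟩ := Finset.mem_Icc.1 hjm
    exact wset_measurable (C M) θ hc hθpos j t h1 h2
  have hint : ∀ t ∈ Finset.Icc 1 T,
      MeasureTheory.IntegrableOn (fun u =>
        (C M) * (trset (bigX (fun _ => C M) θ (t-1)) (bigX (fun _ => C M) θ t)).indicator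
            (fun _ => (1:ℝ)) u
         + ∑ j ∈ Finset.Icc 1 t,
            ({u' : ℝ | ∀ τ ∈ Finset.Icc j t, ¬ transmits (fun _ => C M) θ u' τ}).indicator
              (fun _ => (1:ℝ)) u) (Set.Ico (0:ℝ) 1) := by
    intro t htm
    apply MeasureTheory.Integrable.add
    · exact (ind_integrable _ (trset_measurable _ _)).const_mul (C M)
    · exact MeasureTheory.integrable_finset_sum _
        (fun j hjm => ind_integrable _ (hWmeas t htm j hjm))
  rw [MeasureTheory.integral_finset_sum _ hint]
  -- evaluate each slot integral
  have heval : ∀ t ∈ Finset.Icc 1 T,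
      (∫ u in Set.Ico (0:ℝ) 1,
        ((C M) * (trset (bigX (fun _ => C M) θ (t-1)) (bigX (fun _ => C M) θ t)).indicator
            (fun _ => (1:ℝ)) u
         + ∑ j ∈ Finset.Icc 1 t,
            ({u' : ℝ | ∀ τ ∈ Finset.Icc j t, ¬ transmits (fun _ => C M) θ u' τ}).indicator
              (fun _ => (1:ℝ)) u))
      = (C M) * (volume (trset (bigX (fun _ => C M) θ (t-1)) (bigX (fun _ => C M) θ t)
            ∩ Set.Ico (0:ℝ) 1)).toReal
        + ∑ j ∈ Finset.Icc 1 t,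
            (volume ({u' : ℝ | ∀ τ ∈ Finset.Icc j t, ¬ transmits (fun _ => C M) θ u' τ}
              ∩ Set.Ico (0:ℝ) 1)).toReal := by
    intro t htm
    rw [MeasureTheory.integral_add
      ((ind_integrable _ (trset_measurable _ _)).const_mul (C M))
      (MeasureTheory.integrable_finset_sum _
        (fun j hjm => ind_integrable _ (hWmeas t htm j hjm))),
      MeasureTheory.integral_const_mul,
      MeasureTheory.integral_finset_sum _ (fun j hjm => ind_integrable _ (hWmeas t htm j hjm)),
      ind_integral _ (trset_measurable _ _)]
    congr 1
    apply Finset.sum_congr rfl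
    intro j hjm
    exact ind_integral _ (hWmeas t htm j hjm)
  rw [Finset.sum_congr rfl heval]
  -- bound each slot by the fractional primal cost
  have hbound : ∀ t ∈ Finset.Icc 1 T,
      (C M) * (volume (trset (bigX (fun _ => C M) θ (t-1)) (bigX (fun _ => C M) θ t)
            ∩ Set.Ico (0:ℝ) 1)).toReal
        + ∑ j ∈ Finset.Icc 1 t,
            (volume ({u' : ℝ | ∀ τ ∈ Finset.Icc j t, ¬ transmits (fun _ => C M) θ u' τ}
              ∩ Set.Ico (0:ℝ) 1)).toReal
      ≤ (C M) * xval (fun _ => C M) θ t + ∑ j ∈ Finset.Icc 1 t, zval (fun _ => C M) θ j t := by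
    intro t htm
    obtain ⟨ht1, htT⟩ := Finset.mem_Icc.1 htm
    apply add_le_add
    · -- transmission cost part
      have ha : 0 ≤ bigX (fun _ => C M) θ (t-1) := bigX_nonneg (C M) θ hc hθpos _
      have hab : bigX (fun _ => C M) θ (t-1) ≤ bigX (fun _ => C M) θ t :=
        bigX_mono (C M) θ hc hθpos (by omega)
      have hupper := vol_trset_upper _ _ ha hab
      have hdiff : bigX (fun _ => C M) θ t - bigX (fun _ => C M) θ (t-1)
          = min (xval (fun _ => C M) θ t) 1 := by
        have := bigX_diff (C M) θ t ht1
        linarith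
      have htoReal : (volume (trset (bigX (fun _ => C M) θ (t-1)) (bigX (fun _ => C M) θ t)
            ∩ Set.Ico (0:ℝ) 1)).toReal ≤ min (xval (fun _ => C M) θ t) 1 := by
        rw [← hdiff]
        exact ENNReal.toReal_le_of_le_ofReal (by linarith) hupper
      have hminle : min (xval (fun _ => C M) θ t) 1 ≤ xval (fun _ => C M) θ t := min_le_left _ _
      exact mul_le_mul_of_nonneg_left (le_trans htoReal hminle) hc.le
    · -- age part
      apply Finset.sum_le_sum
      intro j hjm
      obtain ⟨hj1, hjt⟩ := Finset.mem_Icc.1 hjm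
      have ha : 0 ≤ bigX (fun _ => C M) θ (j-1) := bigX_nonneg (C M) θ hc hθpos _
      have hab : bigX (fun _ => C M) θ (j-1) ≤ bigX (fun _ => C M) θ t :=
        bigX_mono (C M) θ hc hθpos (by omega)
      have hS : bigX (fun _ => C M) θ t - bigX (fun _ => C M) θ (j-1)
          = ∑ τ ∈ Finset.Icc j t, min (xval (fun _ => C M) θ τ) 1 := by
        have := bigX_split (C M) θ j t hj1 hjt
        linarith
      have hlower := vol_trset_lower (bigX (fun _ => C M) θ (j-1)) (bigX (fun _ => C M) θ t) ha hab
      have htrv : min (bigX (fun _ => C M) θ t - bigX (fun _ => C M) θ (j-1)) 1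
          ≤ (volume (trset (bigX (fun _ => C M) θ (j-1)) (bigX (fun _ => C M) θ t)
              ∩ Set.Ico (0:ℝ) 1)).toReal :=
        (ENNReal.ofReal_le_iff_le_toReal (vol_trset_ne_top _ _)).1 hlower
      rw [vol_wset_toReal (C M) θ hc hθpos j t hj1 hjt]
      rcases le_total 1 (bigX (fun _ => C M) θ t - bigX (fun _ => C M) θ (j-1)) with hge | hle
      · have : min (bigX (fun _ => C M) θ t - bigX (fun _ => C M) θ (j-1)) 1 = 1 :=
          min_eq_right hge
        rw [this] at htrv
        have := zval_nonneg (C M) θ t j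
        linarith
      · have hminS : min (bigX (fun _ => C M) θ t - bigX (fun _ => C M) θ (j-1)) 1
            = bigX (fun _ => C M) θ t - bigX (fun _ => C M) θ (j-1) := min_eq_left hle
        rw [hminS] at htrv
        have hzb := zbound (C M) θ hc hθpos t j hj1 hjt
        rw [← hS] at hzb
        linarith
  have hsum := Finset.sum_le_sum hbound
  apply le_trans hsum
  -- slot identity
  have hslot : ∀ t ∈ Finset.Icc 1 T,
      (C M) * xval (fun _ => C M) θ t + ∑ j ∈ Finset.Icc 1 t, zval (fun _ => C M) θ j t
      = (1 + 1/θ) * (((Finset.Icc 1 t).filter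
          (fun j => algCond (fun _ => C M) θ t j)).card : ℝ) := by
    intro t htm
    exact slot_identity (C M) θ hc hθpos t (Finset.mem_Icc.1 htm).1
  rw [Finset.sum_congr rfl hslot, ← Finset.mul_sum]
  -- weak duality
  set Dsum : ℝ := ∑ t ∈ Finset.Icc 1 T,
    (((Finset.Icc 1 t).filter (fun j => algCond (fun _ => C M) θ t j)).card : ℝ) with hDdef
  have hinf : Dsum ≤ sInf {c : ℝ | ∃ d : ℕ → ℕ, (∀ t, d t ≤ M) ∧
      c = ∑ t ∈ Finset.Icc 1 T,
            (C (d t) + (1 / N) * ∑ i ∈ Finset.Icc 1 N, (age ind d i t : ℝ))} := by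
    apply le_csInf
    · exact ⟨_, fun _ => M, fun _ => le_rfl, rfl⟩
    · rintro b ⟨d, hd, rfl⟩
      exact weak_duality (C M) θ hc K hθeq hθpos N M T hN ind hzero C hKC hCpos hC0 hC1 d hd
  have hcoef : (0:ℝ) ≤ 1 + 1/θ := by positivity
  calc (1 + 1/θ) * Dsum ≤ (1 + 1/θ) * sInf _ := mul_le_mul_of_nonneg_left hinf hcoef
    _ = _ := by rw [hθdef]; rfl

end
end
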